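/- arXiv:2007.13040 — 5 statements merged into one kernel-verified Lean document; each statement's English description precedes it below -/
import Mathlib

section
/- Fix a matrix W ∈ ℝ^{p×d}, a measurable activation σ: ℝ → ℝ applied entrywise, and a probability distribution T on ℝ^d with E_T[‖σ(WX)‖²] < ∞. Let Σ = E_T[σ(WX)σ(WX)ᵀ] and μ = E_T[σ(WX)], and let Σ^{†/2} denote the square root of the Moore–Penrose pseudoinverse of Σ. Let γ > 0 and define the function class F = { x ↦ φᵀσ(Wx) : φ ∈ ℝ^p, φᵀΣφ ≤ γ }. If rank(Σ) ≤ r and ‖Σ^{†/2}μ‖ ≤ B, then the expected Rademacher complexity of F on an i.i.d. sample X_1,...,X_n from T satisfies E_{X,ε}[ sup_{f∈F} (1/n)|Σ_{i=1}^n ε_i f(X_i)| ] ≤ 2·sqrt( γ·(r + B)/n ), where ε_1,...,ε_n are i.i.d. uniform random signs independent of the sample. -/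
open MeasureTheory ProbabilityTheory Matrix

lemma my_trace_eq_rank {p : ℕ} (Q : Matrix (Fin p) (Fin p) ℝ) (hQ : Q * Q = Q) :
    Q.trace = (Q.rank : ℝ) := by
  classical
  set f := Q.mulVecLin with hf
  have hff : f ∘ₗ f = f := by rw [hf, ← Matrix.mulVecLin_mul, hQ]
  obtain ⟨P, hP⟩ := (LinearMap.isProj_iff_isIdempotentElem f).mpr hff
  have hPeq : P = LinearMap.range f := by
    apply le_antisymm
    · intro x hx; exact ⟨x, hP.map_id x hx⟩
    · rintro x ⟨y, rfl⟩; exact hP.map_mem y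
  have htr := hP.trace
  have h1 : LinearMap.trace ℝ (Fin p → ℝ) f = Q.trace := by
    rw [LinearMap.trace_eq_matrix_trace ℝ (Pi.basisFun ℝ (Fin p)) f,
      LinearMap.toMatrix_eq_toMatrix']
    congr 1
    exact LinearMap.toMatrix'_toLin' Q
  rw [← h1, htr, hPeq]
  rfl

lemma flip_sum_zero {n : ℕ} (i j : Fin n) (hij : i ≠ j) :
    ∑ s : Fin n → Bool, ((if s i then (1:ℝ) else -1) * (if s j then (1:ℝ) else -1)) = 0 := by
  classical
  have hinv : Function.Involutive (fun s : Fin n → Bool => Function.update s i (!(s i))) := by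
    intro s
    funext k
    by_cases hk : k = i
    · subst hk; simp
    · simp [Function.update_of_ne hk]
  let e := hinv.toPerm
  have h := Equiv.sum_comp e (fun s : Fin n → Bool =>
    ((if s i then (1:ℝ) else -1) * (if s j then (1:ℝ) else -1)))
  have h2 : ∀ s : Fin n → Bool,
      ((if e s i then (1:ℝ) else -1) * (if e s j then (1:ℝ) else -1))
      = -((if s i then (1:ℝ) else -1) * (if s j then (1:ℝ) else -1)) := by
    intro s
    have hei : e s i = !(s i) := by simp [e, Function.Involutive.toPerm]
    have hej : e s j = s j := by
      simp [e, Function.Involutive.toPerm, Function.update_of_ne (Ne.symm hij)]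
    rw [hei, hej]
    cases s i <;> cases s j <;> norm_num
  simp only [h2, Finset.sum_neg_distrib] at h
  linarith

lemma sign_sum_sq {n : ℕ} (a : Fin n → ℝ) :
    ∑ s : Fin n → Bool, (∑ i, (if s i then (1:ℝ) else -1) * a i)^2
      = 2^n * ∑ i, (a i)^2 := by
  classical
  have hexp : ∀ s : Fin n → Bool, (∑ i, (if s i then (1:ℝ) else -1) * a i)^2
      = ∑ i, ∑ j, ((if s i then (1:ℝ) else -1) * (if s j then (1:ℝ) else -1)) * (a i * a j) := by
    intro s
    rw [sq, Finset.sum_mul_sum]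
    apply Finset.sum_congr rfl; intro i _
    apply Finset.sum_congr rfl; intro j _
    ring
  simp only [hexp]
  rw [Finset.sum_comm]
  have : ∀ i : Fin n, ∑ s : Fin n → Bool, ∑ j, ((if s i then (1:ℝ) else -1) * (if s j then (1:ℝ) else -1)) * (a i * a j)
      = 2^n * (a i)^2 := by
    intro i
    rw [Finset.sum_comm]
    have hterm : ∀ j : Fin n, ∑ s : Fin n → Bool, ((if s i then (1:ℝ) else -1) * (if s j then (1:ℝ) else -1)) * (a i * a j)
        = if j = i then 2^n * (a i)^2 else 0 := by
      intro j
      rw [← Finset.sum_mul]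
      by_cases hj : j = i
      · subst hj
        have : ∀ s : Fin n → Bool, ((if s j then (1:ℝ) else -1) * (if s j then (1:ℝ) else -1)) = 1 := by
          intro s; cases s j <;> norm_num
        simp only [this, Finset.sum_const, Finset.card_univ]
        simp [Fintype.card_fun, sq]
      · rw [flip_sum_zero i j (Ne.symm hj)]
        simp [hj]
    simp only [hterm]
    simp
  simp only [this]
  rw [← Finset.mul_sum]

lemma dot_mulVec_eq {p : ℕ} (A : Matrix (Fin p) (Fin p) ℝ) (v w : Fin p → ℝ) :
    v ⬝ᵥ A.mulVec w = (Aᵀ.mulVec v) ⬝ᵥ w := by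
  simp only [dotProduct, Matrix.mulVec, Matrix.transpose_apply, Finset.mul_sum,
    Finset.sum_mul]
  rw [Finset.sum_comm]
  apply Finset.sum_congr rfl; intro i _
  apply Finset.sum_congr rfl; intro j _
  ring

lemma sup_dot_bound {p : ℕ} (γ : ℝ) (hγ : 0 < γ) (Sig Pinv Sroot : Matrix (Fin p) (Fin p) ℝ)
    (hSigS : Sig.IsSymm)
    (hP1 : Sig * Pinv * Sig = Sig) (hP3 : (Sig * Pinv).IsSymm)
    (hS1 : Sroot.IsSymm) (hS2 : Sroot * Sroot = Pinv)
    (u : Fin p → ℝ) (c : ℝ) (hc : 0 ≤ c) :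
    ⨆ φ : {v : Fin p → ℝ // v ⬝ᵥ Sig.mulVec v ≤ γ}, |c * (φ.1 ⬝ᵥ u)|
      ≤ c * Real.sqrt γ * Real.sqrt (∑ t, (Sroot.mulVec u t)^2) := by
  classical
  haveI : Nonempty {v : Fin p → ℝ // v ⬝ᵥ Sig.mulVec v ≤ γ} :=
    ⟨⟨0, by simp [hγ.le]⟩⟩
  have hRHS : 0 ≤ c * Real.sqrt γ * Real.sqrt (∑ t, (Sroot.mulVec u t)^2) :=
    mul_nonneg (mul_nonneg hc (Real.sqrt_nonneg _)) (Real.sqrt_nonneg _)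
  have hQ2 : (Sig * Pinv) * (Sig * Pinv) = Sig * Pinv := by
    calc (Sig * Pinv) * (Sig * Pinv) = (Sig * Pinv * Sig) * Pinv := by
          simp only [mul_assoc]
    _ = Sig * Pinv := by rw [hP1]
  have hSQ : Sig * (Sig * Pinv) = Sig := by
    have h := congrArg Matrix.transpose hP1
    rw [Matrix.transpose_mul, hP3.eq, hSigS.eq] at h
    exact h
  by_cases hw : u - (Sig * Pinv).mulVec u = 0
  · -- bounded case
    have hu : u = (Sig * Pinv).mulVec u := sub_eq_zero.mp hw
    apply ciSup_le
    rintro ⟨φ, hφ⟩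
    simp only
    set z := Sroot.mulVec u with hz
    set a := (Sroot * Sig).mulVec φ with ha
    have hdot : φ ⬝ᵥ u = a ⬝ᵥ z := by
      conv_lhs => rw [hu]
      have h1 : (Sig * Pinv).mulVec u = (Sig * Sroot).mulVec z := by
        rw [hz, Matrix.mulVec_mulVec, ← hS2]
        simp only [mul_assoc]
      rw [h1, dot_mulVec_eq]
      congr 1
      rw [Matrix.transpose_mul, hS1.eq, hSigS.eq]
    have haa : a ⬝ᵥ a ≤ γ := by
      have h2 : a ⬝ᵥ a = ((Sig * Sroot) * (Sroot * Sig)).mulVec φ ⬝ᵥ φ := by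
        conv_lhs => rw [ha, dot_mulVec_eq]
        rw [Matrix.transpose_mul, hS1.eq, hSigS.eq, Matrix.mulVec_mulVec]
      have h3 : (Sig * Sroot) * (Sroot * Sig) = Sig := by
        calc (Sig * Sroot) * (Sroot * Sig) = Sig * (Sroot * Sroot) * Sig := by
              simp only [mul_assoc]
        _ = Sig := by rw [hS2, hP1]
      rw [h2, h3, dotProduct_comm]
      exact hφ
    have hCS : (a ⬝ᵥ z)^2 ≤ (∑ t, (a t)^2) * (∑ t, (z t)^2) :=
      Finset.sum_mul_sq_le_sq_mul_sq _ _ _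
    have hsuma : ∑ t, (a t)^2 = a ⬝ᵥ a := by
      simp [dotProduct, sq]
    have habs : |a ⬝ᵥ z| ≤ Real.sqrt γ * Real.sqrt (∑ t, (z t)^2) := by
      rw [← Real.sqrt_sq_eq_abs, ← Real.sqrt_mul hγ.le]
      apply Real.sqrt_le_sqrt
      calc (a ⬝ᵥ z)^2 ≤ (∑ t, (a t)^2) * (∑ t, (z t)^2) := hCS
      _ ≤ γ * ∑ t, (z t)^2 := by
          apply mul_le_mul_of_nonneg_right (hsuma ▸ haa)
          positivity
    rw [hdot, abs_mul, abs_of_nonneg hc, mul_assoc]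
    exact mul_le_mul_of_nonneg_left habs hc
  · -- unbounded case
    rcases eq_or_lt_of_le hc with hc0 | hc0
    · simp only [← hc0, zero_mul, abs_zero, ciSup_const]
      exact le_rfl
    set w := u - (Sig * Pinv).mulVec u with hwdef
    have hSw : Sig.mulVec w = 0 := by
      rw [hwdef, Matrix.mulVec_sub, Matrix.mulVec_mulVec, hSQ, sub_self]
    have hQw : (Sig * Pinv).mulVec w = 0 := by
      rw [hwdef, Matrix.mulVec_sub, Matrix.mulVec_mulVec, hQ2, sub_self]
    have hwu : w ⬝ᵥ u = w ⬝ᵥ w := by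
      have : w ⬝ᵥ (u - w) = 0 := by
        have h4 : u - w = (Sig * Pinv).mulVec u := by rw [hwdef]; ring_nf
        rw [h4, dot_mulVec_eq, hP3.eq, hQw]
        simp
      rw [dotProduct_sub] at this
      linarith
    have hK : 0 < w ⬝ᵥ w := by
      rcases (dotProduct_self_eq_zero (v := w)).not.mpr hw with h
      have hnn : 0 ≤ w ⬝ᵥ w := by
        simp only [dotProduct]
        exact Finset.sum_nonneg fun t _ => mul_self_nonneg _
      exact lt_of_le_of_ne hnn (Ne.symm h)
    have hnb : ¬ BddAbove (Set.range fun φ : {v : Fin p → ℝ // v ⬝ᵥ Sig.mulVec v ≤ γ} =>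
        |c * (φ.1 ⬝ᵥ u)|) := by
      rintro ⟨M, hM⟩
      set k := (|M| + 1) / (c * (w ⬝ᵥ w)) with hk
      have hkpos : 0 < c * (w ⬝ᵥ w) := mul_pos hc0 hK
      have hmem : (k • w) ⬝ᵥ Sig.mulVec (k • w) ≤ γ := by
        rw [Matrix.mulVec_smul, hSw]
        simp [hγ.le]
      have hval := hM (Set.mem_range_self (⟨k • w, hmem⟩ :
        {v : Fin p → ℝ // v ⬝ᵥ Sig.mulVec v ≤ γ}))
      simp only [smul_dotProduct] at hval
      rw [hwu] at hval
      have heq : c * (k • (w ⬝ᵥ w)) = |M| + 1 := by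
        rw [hk, smul_eq_mul]
        field_simp
      rw [heq] at hval
      have h5 : |M| + 1 ≤ M := by
        rwa [abs_of_nonneg (by positivity)] at hval
      have := le_abs_self M
      linarith
    rw [Real.iSup_of_not_bddAbove hnb]
    exact hRHS

lemma integral_sqrt_le {Ω : Type*} [MeasurableSpace Ω] (μ : Measure Ω) [IsProbabilityMeasure μ]
    (g : Ω → ℝ) (hgi : Integrable g μ) (hgnn : ∀ ω, 0 ≤ g ω) :
    ∫ ω, Real.sqrt (g ω) ∂μ ≤ Real.sqrt (∫ ω, g ω ∂μ) := by
  have hsm : AEStronglyMeasurable (fun ω => Real.sqrt (g ω)) μ :=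
    Real.continuous_sqrt.comp_aestronglyMeasurable hgi.aestronglyMeasurable
  have hmem : MemLp (fun ω => Real.sqrt (g ω)) 2 μ := by
    rw [memLp_two_iff_integrable_sq hsm]
    have : (fun ω => (Real.sqrt (g ω))^2) = g := by
      funext ω; exact Real.sq_sqrt (hgnn ω)
    rwa [this]
  have hvar := variance_nonneg (fun ω => Real.sqrt (g ω)) μ
  rw [variance_eq_sub hmem] at hvar
  have heq : μ[(fun ω => Real.sqrt (g ω)) ^ 2] = ∫ ω, g ω ∂μ := by
    apply integral_congr_ae
    filter_upwards with ω
    simp [Real.sq_sqrt (hgnn ω)]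
  apply Real.le_sqrt_of_sq_le
  rw [← heq]
  linarith

/-- **Rademacher complexity bound for the constrained two-layer class.**
With feature map `x ↦ (σ(Wx)_t)_t`, second-moment matrix `Σ = E_T[σ(WX)σ(WX)ᵀ]`, mean
`μvec = E_T[σ(WX)]`, a symmetric PSD square root `Sroot` of the Moore–Penrose pseudoinverse
`Pinv` of `Σ` (characterized by the four Penrose conditions), `rank Σ ≤ r` and
`‖Sroot μvec‖ ≤ B`, the expected Rademacher complexity of
`F = {x ↦ φᵀσ(Wx) : φᵀΣφ ≤ γ}` on an i.i.d. sample of size `n` from `T` is at most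
`2√(γ(r+B)/n)`.  The expectation over the signs is written as the average over all
sign patterns `s : Fin n → Bool`. -/
theorem rademacher_two_layer_bound
    {Ω : Type*} [MeasurableSpace Ω] (μ : Measure Ω) [IsProbabilityMeasure μ]
    (p d : ℕ) (W : Matrix (Fin p) (Fin d) ℝ)
    (act : ℝ → ℝ) (hact : Measurable act)
    (T : Measure (Fin d → ℝ)) [IsProbabilityMeasure T]
    (hmom : Integrable (fun x => ∑ t : Fin p, (act (W.mulVec x t)) ^ 2) T)
    (γ : ℝ) (hγ : 0 < γ)
    (Sig : Matrix (Fin p) (Fin p) ℝ)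
    (hSig : Sig = Matrix.of fun s t => ∫ x, act (W.mulVec x s) * act (W.mulVec x t) ∂T)
    (μvec : Fin p → ℝ) (hμvec : μvec = fun t => ∫ x, act (W.mulVec x t) ∂T)
    (Pinv Sroot : Matrix (Fin p) (Fin p) ℝ)
    (hP1 : Sig * Pinv * Sig = Sig) (hP2 : Pinv * Sig * Pinv = Pinv)
    (hP3 : (Sig * Pinv).IsSymm) (hP4 : (Pinv * Sig).IsSymm)
    (hS1 : Sroot.IsSymm) (hSpos : Sroot.PosSemidef) (hS2 : Sroot * Sroot = Pinv)
    (r : ℕ) (B : ℝ)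
    (hrank : Sig.rank ≤ r)
    (hB : Real.sqrt (∑ t : Fin p, (Sroot.mulVec μvec t) ^ 2) ≤ B)
    (n : ℕ) (hn : 0 < n)
    (X : Fin n → Ω → (Fin d → ℝ))
    (hXmeas : ∀ i, Measurable (X i))
    (hXlaw : ∀ i, Measure.map (X i) μ = T)
    (hXindep : iIndepFun X μ) :
    (∫ ω, (1 / (2 : ℝ) ^ n) * ∑ s : Fin n → Bool,
        ⨆ φ : {v : Fin p → ℝ // v ⬝ᵥ Sig.mulVec v ≤ γ},
          |(1 / (n : ℝ)) * ∑ i : Fin n,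
            (if s i then (1 : ℝ) else -1) *
              (φ.1 ⬝ᵥ fun t => act (W.mulVec (X i ω) t))| ∂μ)
      ≤ 2 * Real.sqrt (γ * ((r : ℝ) + B) / n) := by
  classical
  have hnR : (0:ℝ) < n := Nat.cast_pos.mpr hn
  -- symmetry of Sig
  have hSigS : Sig.IsSymm := by
    rw [hSig]
    ext s t
    simp only [Matrix.transpose_apply, Matrix.of_apply]
    simp_rw [mul_comm]
  -- measurability of features
  have hmeasf : ∀ a : Fin p, Measurable fun x : Fin d → ℝ => act (W.mulVec x a) := by
    intro a
    apply hact.comp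
    have : (fun x : Fin d → ℝ => W.mulVec x a) = fun x => ∑ j, W a j * x j := by
      funext x; simp [Matrix.mulVec, dotProduct]
    rw [this]
    exact Finset.measurable_sum _ fun j _ => (measurable_pi_apply j).const_mul _
  -- integrability of products
  have hIab : ∀ a b : Fin p,
      Integrable (fun x => act (W.mulVec x a) * act (W.mulVec x b)) T := by
    intro a b
    apply hmom.mono (((hmeasf a).mul (hmeasf b)).aestronglyMeasurable)
    filter_upwards with x
    have h1 : (act (W.mulVec x a))^2 ≤ ∑ t : Fin p, (act (W.mulVec x t))^2 :=
      Finset.single_le_sum (f := fun t : Fin p => (act (W.mulVec x t))^2)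
        (fun t _ => sq_nonneg _) (Finset.mem_univ a)
    have h2 : (act (W.mulVec x b))^2 ≤ ∑ t : Fin p, (act (W.mulVec x t))^2 :=
      Finset.single_le_sum (f := fun t : Fin p => (act (W.mulVec x t))^2)
        (fun t _ => sq_nonneg _) (Finset.mem_univ b)
    have hnn : (0:ℝ) ≤ ∑ t : Fin p, (act (W.mulVec x t))^2 :=
      Finset.sum_nonneg fun t _ => sq_nonneg _
    rw [Real.norm_eq_abs, Real.norm_eq_abs, abs_of_nonneg hnn, Pi.mul_apply, abs_mul]
    nlinarith [abs_nonneg (act (W.mulVec x a)), abs_nonneg (act (W.mulVec x b)),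
      sq_abs (act (W.mulVec x a)), sq_abs (act (W.mulVec x b))]
  have hSigab : ∀ a b : Fin p,
      ∫ x, act (W.mulVec x a) * act (W.mulVec x b) ∂T = Sig a b := by
    intro a b; rw [hSig]; rfl
  -- the single-sample squared feature norm
  set h : (Fin d → ℝ) → ℝ := fun x => ∑ t, (Sroot.mulVec (fun a => act (W.mulVec x a)) t)^2
    with hhdef
  have hexp : h = fun x => ∑ t, ∑ a, ∑ b,
      (Sroot t a * Sroot t b) * (act (W.mulVec x a) * act (W.mulVec x b)) := by
    funext x
    apply Finset.sum_congr rfl; intro t _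
    rw [sq]
    simp only [Matrix.mulVec, dotProduct]
    rw [Finset.sum_mul_sum]
    apply Finset.sum_congr rfl; intro a _
    apply Finset.sum_congr rfl; intro b _
    ring
  have hh_meas : Measurable h := by
    rw [hexp]
    apply Finset.measurable_sum _ fun t _ => ?_
    apply Finset.measurable_sum _ fun a _ => ?_
    apply Finset.measurable_sum _ fun b _ => ?_
    exact (((hmeasf a).mul (hmeasf b)).const_mul _)
  have hh_int : Integrable h T := by
    rw [hexp]
    apply integrable_finset_sum _ fun t _ => ?_
    apply integrable_finset_sum _ fun a _ => ?_
    apply integrable_finset_sum _ fun b _ => ?_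
    exact (hIab a b).const_mul _
  set tr : ℝ := Matrix.trace (Sroot * Sig * Sroot) with htrdef
  have hh_integral : ∫ x, h x ∂T = tr := by
    rw [hexp]
    rw [integral_finset_sum _ fun t _ => (integrable_finset_sum _ fun a _ =>
      integrable_finset_sum _ fun b _ => (hIab a b).const_mul _)]
    have : ∀ t : Fin p, ∫ x, (∑ a, ∑ b,
        (Sroot t a * Sroot t b) * (act (W.mulVec x a) * act (W.mulVec x b))) ∂T
        = ∑ a, ∑ b, (Sroot t a * Sroot t b) * Sig a b := by
      intro t
      rw [integral_finset_sum _ fun a _ =>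
        (integrable_finset_sum _ fun b _ => (hIab a b).const_mul _)]
      apply Finset.sum_congr rfl; intro a _
      rw [integral_finset_sum _ fun b _ => (hIab a b).const_mul _]
      apply Finset.sum_congr rfl; intro b _
      rw [integral_const_mul, hSigab]
    simp only [this]
    rw [htrdef]
    have hsym : ∀ a b, Sroot a b = Sroot b a := by
      intro a b
      conv_lhs => rw [← hS1.eq]
      rfl
    simp only [Matrix.trace, Matrix.diag, Matrix.mul_apply, Finset.sum_mul]
    apply Finset.sum_congr rfl; intro t _
    rw [Finset.sum_comm]
    apply Finset.sum_congr rfl; intro a _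
    apply Finset.sum_congr rfl; intro b _
    rw [hsym a t]
    ring
  -- integrability and value over μ
  have hXint : ∀ i, Integrable (fun ω => h (X i ω)) μ := by
    intro i
    have := (integrable_map_measure hh_meas.aestronglyMeasurable
      (hXmeas i).aemeasurable).mp (by rwa [hXlaw i])
    exact this
  have hXval : ∀ i, ∫ ω, h (X i ω) ∂μ = tr := by
    intro i
    rw [← hh_integral, ← hXlaw i,
      integral_map (hXmeas i).aemeasurable hh_meas.aestronglyMeasurable]
  set g : Ω → ℝ := fun ω => ∑ i, h (X i ω) with hgdef
  have hg_int : Integrable g μ := integrable_finset_sum _ fun i _ => hXint i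
  have hg_meas : Measurable g := Finset.measurable_sum _ fun i _ => hh_meas.comp (hXmeas i)
  have hg_nonneg : ∀ ω, 0 ≤ g ω := by
    intro ω
    apply Finset.sum_nonneg; intro i _
    apply Finset.sum_nonneg; intro t _
    exact sq_nonneg _
  have hg_integral : ∫ ω, g ω ∂μ = n * tr := by
    rw [hgdef]
    rw [integral_finset_sum _ fun i _ => hXint i]
    simp only [hXval]
    simp [mul_comm]
  -- pointwise key bound
  have key : ∀ ω, (1 / (2 : ℝ) ^ n) * ∑ s : Fin n → Bool,
        (⨆ φ : {v : Fin p → ℝ // v ⬝ᵥ Sig.mulVec v ≤ γ},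
          |(1 / (n : ℝ)) * ∑ i : Fin n,
            (if s i then (1 : ℝ) else -1) *
              (φ.1 ⬝ᵥ fun t => act (W.mulVec (X i ω) t))|)
      ≤ (1 / (n:ℝ)) * Real.sqrt γ * Real.sqrt (g ω) := by
    intro ω
    set u : (Fin n → Bool) → Fin p → ℝ :=
      fun s t => ∑ i, (if s i then (1:ℝ) else -1) * act (W.mulVec (X i ω) t) with hudef
    set q : (Fin n → Bool) → ℝ := fun s => ∑ t, (Sroot.mulVec (u s) t)^2 with hqdef
    have hq_nonneg : ∀ s, 0 ≤ q s := fun s => Finset.sum_nonneg fun t _ => sq_nonneg _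
    -- rewrite each sup
    have hstep1 : ∀ s : Fin n → Bool,
        (⨆ φ : {v : Fin p → ℝ // v ⬝ᵥ Sig.mulVec v ≤ γ},
          |(1 / (n : ℝ)) * ∑ i : Fin n,
            (if s i then (1 : ℝ) else -1) *
              (φ.1 ⬝ᵥ fun t => act (W.mulVec (X i ω) t))|)
        ≤ (1/(n:ℝ)) * Real.sqrt γ * Real.sqrt (q s) := by
      intro s
      have hswap : ∀ φ : Fin p → ℝ,
          ∑ i : Fin n, (if s i then (1:ℝ) else -1) *
            (φ ⬝ᵥ fun t => act (W.mulVec (X i ω) t)) = φ ⬝ᵥ u s := by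
        intro φ
        simp only [dotProduct, hudef, Finset.mul_sum]
        rw [Finset.sum_comm]
        apply Finset.sum_congr rfl; intro t _
        apply Finset.sum_congr rfl; intro i _
        ring
      have hcongr : (⨆ φ : {v : Fin p → ℝ // v ⬝ᵥ Sig.mulVec v ≤ γ},
          |(1 / (n : ℝ)) * ∑ i : Fin n,
            (if s i then (1 : ℝ) else -1) *
              (φ.1 ⬝ᵥ fun t => act (W.mulVec (X i ω) t))|)
          = ⨆ φ : {v : Fin p → ℝ // v ⬝ᵥ Sig.mulVec v ≤ γ},
            |(1 / (n : ℝ)) * (φ.1 ⬝ᵥ u s)| := by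
        apply iSup_congr
        intro φ
        rw [hswap φ.1]
      rw [hcongr]
      exact sup_dot_bound γ hγ Sig Pinv Sroot hSigS hP1 hP3 hS1 hS2 (u s) (1/(n:ℝ))
        (by positivity)
    -- sum of q over signs
    have hqsum : ∑ s : Fin n → Bool, q s = 2^n * g ω := by
      have hlin : ∀ s t, Sroot.mulVec (u s) t
          = ∑ i, (if s i then (1:ℝ) else -1) *
            (Sroot.mulVec (fun a => act (W.mulVec (X i ω) a)) t) := by
        intro s t
        simp only [Matrix.mulVec, dotProduct, hudef, Finset.mul_sum]
        rw [Finset.sum_comm]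
        apply Finset.sum_congr rfl; intro i _
        apply Finset.sum_congr rfl; intro a _
        ring
      simp only [hqdef]
      rw [Finset.sum_comm]
      have : ∀ t : Fin p, ∑ s : Fin n → Bool, (Sroot.mulVec (u s) t)^2
          = 2^n * ∑ i, (Sroot.mulVec (fun a => act (W.mulVec (X i ω) a)) t)^2 := by
        intro t
        have := sign_sum_sq (fun i => Sroot.mulVec (fun a => act (W.mulVec (X i ω) a)) t)
        simp only [← hlin] at this
        exact this
      simp only [this]
      rw [← Finset.mul_sum, hgdef, hhdef]
      rw [Finset.sum_comm]
    -- Cauchy-Schwarz over signs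
    have hCS : ∑ s : Fin n → Bool, Real.sqrt (q s) ≤ 2^n * Real.sqrt (g ω) := by
      have hcs := Finset.sum_mul_sq_le_sq_mul_sq Finset.univ (fun _ : Fin n → Bool => (1:ℝ))
        (fun s => Real.sqrt (q s))
      simp only [one_mul, one_pow, Finset.sum_const, Finset.card_univ, Fintype.card_fun,
        Fintype.card_bool, Fintype.card_fin, nsmul_eq_mul, mul_one] at hcs
      have hq2 : ∀ s : Fin n → Bool, (Real.sqrt (q s))^2 = q s := fun s => Real.sq_sqrt (hq_nonneg s)
      simp only [hq2] at hcs
      rw [hqsum] at hcs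
      push_cast at hcs
      have hsnn : 0 ≤ ∑ s : Fin n → Bool, Real.sqrt (q s) :=
        Finset.sum_nonneg fun s _ => Real.sqrt_nonneg _
      calc ∑ s : Fin n → Bool, Real.sqrt (q s)
          = Real.sqrt ((∑ s : Fin n → Bool, Real.sqrt (q s))^2) :=
            (Real.sqrt_sq hsnn).symm
        _ ≤ Real.sqrt ((2:ℝ)^n * (2^n * g ω)) := Real.sqrt_le_sqrt hcs
        _ = 2^n * Real.sqrt (g ω) := by
            rw [← mul_assoc, (by ring : (2:ℝ)^n * 2^n = ((2:ℝ)^n)^2),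
              Real.sqrt_mul (sq_nonneg _), Real.sqrt_sq (by positivity)]
    calc (1 / (2 : ℝ) ^ n) * ∑ s : Fin n → Bool,
        (⨆ φ : {v : Fin p → ℝ // v ⬝ᵥ Sig.mulVec v ≤ γ},
          |(1 / (n : ℝ)) * ∑ i : Fin n,
            (if s i then (1 : ℝ) else -1) *
              (φ.1 ⬝ᵥ fun t => act (W.mulVec (X i ω) t))|)
        ≤ (1 / (2 : ℝ) ^ n) * ∑ s : Fin n → Bool,
            ((1/(n:ℝ)) * Real.sqrt γ * Real.sqrt (q s)) := by
          apply mul_le_mul_of_nonneg_left _ (by positivity)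
          exact Finset.sum_le_sum fun s _ => hstep1 s
      _ = (1 / (2 : ℝ) ^ n) * ((1/(n:ℝ)) * Real.sqrt γ *
            ∑ s : Fin n → Bool, Real.sqrt (q s)) := by
          rw [← Finset.mul_sum]
      _ ≤ (1 / (2 : ℝ) ^ n) * ((1/(n:ℝ)) * Real.sqrt γ * (2^n * Real.sqrt (g ω))) := by
          apply mul_le_mul_of_nonneg_left _ (by positivity)
          apply mul_le_mul_of_nonneg_left hCS (by positivity)
      _ = (1 / (n:ℝ)) * Real.sqrt γ * Real.sqrt (g ω) := by
          field_simp
  -- integrate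
  have hsqrtg_int : Integrable (fun ω => Real.sqrt (g ω)) μ := by
    apply (hg_int.add (integrable_const 1)).mono
      ((Real.continuous_sqrt.measurable.comp hg_meas).aestronglyMeasurable)
    filter_upwards with ω
    simp only [Function.comp_apply, Pi.add_apply, Pi.one_apply, Real.norm_eq_abs]
    rw [abs_of_nonneg (Real.sqrt_nonneg _),
      abs_of_nonneg (by positivity : (0:ℝ) ≤ g ω + 1)]
    nlinarith [Real.sq_sqrt (hg_nonneg ω), Real.sqrt_nonneg (g ω)]
  have hint1 : (∫ ω, (1 / (2 : ℝ) ^ n) * ∑ s : Fin n → Bool,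
        ⨆ φ : {v : Fin p → ℝ // v ⬝ᵥ Sig.mulVec v ≤ γ},
          |(1 / (n : ℝ)) * ∑ i : Fin n,
            (if s i then (1 : ℝ) else -1) *
              (φ.1 ⬝ᵥ fun t => act (W.mulVec (X i ω) t))| ∂μ)
      ≤ ∫ ω, (1 / (n:ℝ)) * Real.sqrt γ * Real.sqrt (g ω) ∂μ := by
    apply integral_mono_of_nonneg
    · filter_upwards with ω
      apply mul_nonneg (by positivity)
      apply Finset.sum_nonneg; intro s _
      exact Real.iSup_nonneg fun φ => abs_nonneg _
    · exact (hsqrtg_int.const_mul _)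
    · filter_upwards with ω
      exact key ω
  have hint2 : ∫ ω, (1 / (n:ℝ)) * Real.sqrt γ * Real.sqrt (g ω) ∂μ
      ≤ (1 / (n:ℝ)) * Real.sqrt γ * Real.sqrt ((n:ℝ) * tr) := by
    rw [integral_const_mul]
    apply mul_le_mul_of_nonneg_left _ (by positivity)
    calc ∫ ω, Real.sqrt (g ω) ∂μ ≤ Real.sqrt (∫ ω, g ω ∂μ) :=
          integral_sqrt_le μ g hg_int hg_nonneg
      _ = Real.sqrt ((n:ℝ) * tr) := by rw [hg_integral]
  -- final numerics
  have hB0 : 0 ≤ B := le_trans (Real.sqrt_nonneg _) hB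
  have htr_le : tr ≤ (r:ℝ) := by
    have hQidem : (Sig * Pinv) * (Sig * Pinv) = Sig * Pinv := by
      calc (Sig * Pinv) * (Sig * Pinv) = (Sig * Pinv * Sig) * Pinv := by
            simp only [mul_assoc]
      _ = Sig * Pinv := by rw [hP1]
    have htreq : tr = ((Sig * Pinv).rank : ℝ) := by
      rw [htrdef, Matrix.trace_mul_comm, ← mul_assoc, hS2, Matrix.trace_mul_comm]
      exact my_trace_eq_rank _ hQidem
    rw [htreq]
    exact_mod_cast le_trans (Matrix.rank_mul_le_left Sig Pinv) hrank
  have htr0 : 0 ≤ tr := by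
    rw [← hh_integral]
    apply integral_nonneg
    intro x
    exact Finset.sum_nonneg fun t _ => sq_nonneg _
  have hfinal : (1 / (n:ℝ)) * Real.sqrt γ * Real.sqrt ((n:ℝ) * tr)
      ≤ 2 * Real.sqrt (γ * ((r : ℝ) + B) / n) := by
    have e1 : (1 / (n:ℝ)) * Real.sqrt γ * Real.sqrt ((n:ℝ) * tr)
        = Real.sqrt (γ * tr / n) := by
      rw [mul_assoc, ← Real.sqrt_mul hγ.le]
      rw [show γ * ((n:ℝ) * tr) = (γ * tr / n) * (n:ℝ)^2 by field_simp]
      rw [Real.sqrt_mul' _ (sq_nonneg (n:ℝ)), Real.sqrt_sq hnR.le]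
      field_simp
    rw [e1]
    have h2 : Real.sqrt (γ * tr / n) ≤ Real.sqrt (γ * ((r:ℝ) + B) / n) := by
      apply Real.sqrt_le_sqrt
      gcongr
      linarith
    have h3 := Real.sqrt_nonneg (γ * ((r:ℝ) + B) / n)
    linarith
  calc (∫ ω, (1 / (2 : ℝ) ^ n) * ∑ s : Fin n → Bool,
        ⨆ φ : {v : Fin p → ℝ // v ⬝ᵥ Sig.mulVec v ≤ γ},
          |(1 / (n : ℝ)) * ∑ i : Fin n,
            (if s i then (1 : ℝ) else -1) *
              (φ.1 ⬝ᵥ fun t => act (W.mulVec (X i ω) t))| ∂μ)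
      ≤ ∫ ω, (1 / (n:ℝ)) * Real.sqrt γ * Real.sqrt (g ω) ∂μ := hint1
    _ ≤ (1 / (n:ℝ)) * Real.sqrt γ * Real.sqrt ((n:ℝ) * tr) := hint2
    _ ≤ 2 * Real.sqrt (γ * ((r : ℝ) + B) / n) := hfinal
end

section
/- Let (Ω, ℱ, P) be a probability space and let A, B, M, S, T be random variables on Ω taking values in finite sets. Suppose there exist functions F and G such that M = F(A, B) almost surely and (A, B) = G(M, T) almost surely. Then I(M ; S | T) − I(B ; S | T) = I(A ; S | (B, T)), and in particular I(M ; S | T) ≥ I(B ; S | T). -/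
open MeasureTheory ProbabilityTheory

/-- Shannon entropy of a finitely-valued random variable `X` under `μ`:
`H(X) = Σ_a (−P(X=a) log P(X=a))`. -/
noncomputable def finEntropy {Ω : Type*} [MeasurableSpace Ω] {α : Type*} [Fintype α]
    (μ : Measure Ω) (X : Ω → α) : ℝ :=
  ∑ a : α, Real.negMulLog ((μ (X ⁻¹' {a})).toReal)

/-- Conditional Shannon entropy `H(X | Y) = H(X, Y) − H(Y)`. -/
noncomputable def finCondEntropy {Ω : Type*} [MeasurableSpace Ω] {α β : Type*}
    [Fintype α] [Fintype β] (μ : Measure Ω) (X : Ω → α) (Y : Ω → β) : ℝ :=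
  finEntropy μ (fun ω => (X ω, Y ω)) - finEntropy μ Y

/-- Conditional mutual information `I(X ; Y | Z) = H(X | Z) − H(X | (Y, Z))`. -/
noncomputable def finCondMutualInfo {Ω : Type*} [MeasurableSpace Ω] {α β γ : Type*}
    [Fintype α] [Fintype β] [Fintype γ]
    (μ : Measure Ω) (X : Ω → α) (Y : Ω → β) (Z : Ω → γ) : ℝ :=
  finCondEntropy μ X Z - finCondEntropy μ X (fun ω => (Y ω, Z ω))

/-- Mutual information `I(X ; Y) = H(X) − H(X | Y)`. -/
noncomputable def finMutualInfo {Ω : Type*} [MeasurableSpace Ω] {α β : Type*}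
    [Fintype α] [Fintype β] (μ : Measure Ω) (X : Ω → α) (Y : Ω → β) : ℝ :=
  finEntropy μ X - finCondEntropy μ X Y

/-! ### Auxiliary lemmas -/

section Aux

open Real

/-- per-term log-sum estimate -/
lemma metamix_term_bound {q a b s : ℝ} (hq : 0 ≤ q) (hqa : q ≤ a) (hqb : q ≤ b) (has : a ≤ s) :
    q * (Real.log a + Real.log b - Real.log q - Real.log s) ≤ a * b / s - q := by
  rcases eq_or_lt_of_le hq with h0 | h0
  · rw [← h0]
    have ha : 0 ≤ a := le_trans hq hqa
    have hb : 0 ≤ b := le_trans hq hqb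
    have hs : 0 ≤ s := le_trans ha has
    simp only [zero_mul, sub_zero]
    positivity
  · have ha : 0 < a := lt_of_lt_of_le h0 hqa
    have hb : 0 < b := lt_of_lt_of_le h0 hqb
    have hs : 0 < s := lt_of_lt_of_le ha has
    have key : Real.log a + Real.log b - Real.log q - Real.log s
        = Real.log (a * b / (q * s)) := by
      rw [Real.log_div (by positivity) (by positivity), Real.log_mul ha.ne' hb.ne',
        Real.log_mul h0.ne' hs.ne']
      ring
    rw [key]
    have hlog := Real.log_le_sub_one_of_pos (show (0:ℝ) < a * b / (q * s) by positivity)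
    have h1 : q * Real.log (a * b / (q * s)) ≤ q * (a * b / (q * s) - 1) :=
      mul_le_mul_of_nonneg_left hlog hq
    have h2 : q * (a * b / (q * s) - 1) = a * b / s - q := by
      field_simp
    linarith

/-- Submodularity-type inequality for `negMulLog` sums (two variables, arbitrary total mass). -/
lemma metamix_two_var {α β : Type*} [Fintype α] [Fintype β]
    (q : α → β → ℝ) (hq : ∀ x y, 0 ≤ q x y) :
    Real.negMulLog (∑ x, ∑ y, q x y) + ∑ x, ∑ y, Real.negMulLog (q x y)
      ≤ ∑ x, Real.negMulLog (∑ y, q x y) + ∑ y, Real.negMulLog (∑ x, q x y) := by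
  set a : α → ℝ := fun x => ∑ y, q x y with ha_def
  set b : β → ℝ := fun y => ∑ x, q x y with hb_def
  set s : ℝ := ∑ x, ∑ y, q x y with hs_def
  have ha0 : ∀ x, 0 ≤ a x := fun x => Finset.sum_nonneg fun y _ => hq x y
  have hb0 : ∀ y, 0 ≤ b y := fun y => Finset.sum_nonneg fun x _ => hq x y
  have hqa : ∀ x y, q x y ≤ a x := fun x y =>
    Finset.single_le_sum (fun y _ => hq x y) (Finset.mem_univ y)
  have hqb : ∀ x y, q x y ≤ b y := fun x y =>
    Finset.single_le_sum (fun x _ => hq x y) (Finset.mem_univ x)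
  have has : ∀ x, a x ≤ s := fun x =>
    Finset.single_le_sum (fun x _ => ha0 x) (Finset.mem_univ x)
  have hsa : ∑ x, a x = s := rfl
  have hsb : ∑ y, b y = s := by rw [hb_def, hs_def]; exact Finset.sum_comm
  -- expansions
  have hexpa : ∑ x, Real.negMulLog (a x) = ∑ x, ∑ y, q x y * (-Real.log (a x)) := by
    refine Finset.sum_congr rfl fun x _ => ?_
    rw [← Finset.sum_mul, Real.negMulLog]
    ring
  have hexpb : ∑ y, Real.negMulLog (b y) = ∑ x, ∑ y, q x y * (-Real.log (b y)) := by
    rw [Finset.sum_comm]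
    refine Finset.sum_congr rfl fun y _ => ?_
    rw [← Finset.sum_mul, Real.negMulLog]
    ring
  have hexps : Real.negMulLog s = ∑ x, ∑ y, q x y * (-Real.log s) := by
    rw [Real.negMulLog]
    rw [show ∑ x, ∑ y, q x y * (-Real.log s) = (∑ x, ∑ y, q x y) * (-Real.log s) by
      rw [Finset.sum_mul]; exact Finset.sum_congr rfl fun x _ => (Finset.sum_mul _ _ _).symm]
    ring
  have hexpq : ∑ x, ∑ y, Real.negMulLog (q x y)
      = ∑ x, ∑ y, q x y * (-Real.log (q x y)) := by
    refine Finset.sum_congr rfl fun x _ => Finset.sum_congr rfl fun y _ => ?_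
    rw [Real.negMulLog]; ring
  -- key per-term estimate summed
  have hkey : ∑ x, ∑ y, q x y *
      (Real.log (a x) + Real.log (b y) - Real.log (q x y) - Real.log s) ≤ 0 := by
    have hterm : ∀ x y, q x y *
        (Real.log (a x) + Real.log (b y) - Real.log (q x y) - Real.log s)
        ≤ a x * b y / s - q x y := fun x y =>
      metamix_term_bound (hq x y) (hqa x y) (hqb x y) (has x)
    have hsumq : ∑ x, ∑ y, (a x * b y / s - q x y) = 0 := by
      have h1 : ∑ x, ∑ y, (a x * b y / s) = s * s / s := by
        simp only [div_eq_mul_inv]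
        simp only [← Finset.sum_mul]
        rw [← Finset.sum_mul_sum, hsa, hsb]
      have h2 : s * s / s - s = 0 := by
        rcases eq_or_ne s 0 with h | h
        · simp [h]
        · rw [mul_div_assoc, div_self h, mul_one, sub_self]
      have h3 : ∑ x, ∑ y, q x y = s := rfl
      simp only [Finset.sum_sub_distrib]
      rw [h1, h3, h2]
    calc ∑ x, ∑ y, q x y *
          (Real.log (a x) + Real.log (b y) - Real.log (q x y) - Real.log s)
        ≤ ∑ x, ∑ y, (a x * b y / s - q x y) :=
          Finset.sum_le_sum fun x _ => Finset.sum_le_sum fun y _ => hterm x y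
      _ = 0 := hsumq
  have comb : ∑ x, Real.negMulLog (a x) + ∑ y, Real.negMulLog (b y)
      - Real.negMulLog s - ∑ x, ∑ y, Real.negMulLog (q x y)
      = -(∑ x, ∑ y, q x y *
          (Real.log (a x) + Real.log (b y) - Real.log (q x y) - Real.log s)) := by
    rw [hexpa, hexpb, hexps, hexpq,
      ← Finset.sum_add_distrib, ← Finset.sum_sub_distrib, ← Finset.sum_sub_distrib,
      ← Finset.sum_neg_distrib]
    refine Finset.sum_congr rfl fun x _ => ?_
    rw [← Finset.sum_add_distrib, ← Finset.sum_sub_distrib, ← Finset.sum_sub_distrib,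
      ← Finset.sum_neg_distrib]
    refine Finset.sum_congr rfl fun y _ => ?_
    ring
  linarith

end Aux

section Aux2

variable {Ω : Type*} [MeasurableSpace Ω] {μ : Measure Ω}

lemma metamix_measure_inter_ae {α β : Type*} {X : Ω → α} {Y : Ω → β} {f : α → β}
    (hf : ∀ᵐ ω ∂μ, Y ω = f (X ω)) (a : α) :
    μ (X ⁻¹' {a}) = μ (X ⁻¹' {a} ∩ Y ⁻¹' {f a}) := by
  refine measure_congr ?_
  rw [Filter.eventuallyEq_set]
  filter_upwards [hf] with ω h
  simp only [Set.mem_inter_iff, Set.mem_preimage, Set.mem_singleton_iff]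
  constructor
  · intro hx; exact ⟨hx, by rw [h, hx]⟩
  · exact fun h' => h'.1

lemma metamix_key {α β : Type*} {X : Ω → α} {Y : Ω → β} {f : α → β} {g : β → α}
    (hf : ∀ᵐ ω ∂μ, Y ω = f (X ω)) (hg : ∀ᵐ ω ∂μ, X ω = g (Y ω))
    (a : α) (ha : μ (X ⁻¹' {a}) ≠ 0) :
    g (f a) = a ∧ μ (Y ⁻¹' {f a}) = μ (X ⁻¹' {a}) := by
  have hA := metamix_measure_inter_ae hf a
  have hgf : g (f a) = a := by
    by_contra hne
    apply ha
    rw [hA]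
    refine measure_mono_null (fun ω hω => ?_) (ae_iff.mp hg)
    have hx : X ω = a := hω.1
    have hy : Y ω = f a := hω.2
    intro heq
    exact hne (by rw [← hy, ← heq, hx])
  refine ⟨hgf, ?_⟩
  have hB := metamix_measure_inter_ae hg (f a)
  rw [hB, hgf, Set.inter_comm, ← hA]

lemma metamix_finEntropy_congr {α β : Type*} [Fintype α] [Fintype β]
    {X : Ω → α} {Y : Ω → β} (f : α → β) (g : β → α)
    (hf : ∀ᵐ ω ∂μ, Y ω = f (X ω)) (hg : ∀ᵐ ω ∂μ, X ω = g (Y ω)) :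
    finEntropy μ X = finEntropy μ Y := by
  classical
  unfold finEntropy
  have hXf : ∑ a : α, Real.negMulLog ((μ (X ⁻¹' {a})).toReal)
      = ∑ a ∈ Finset.univ.filter (fun a => μ (X ⁻¹' {a}) ≠ 0),
          Real.negMulLog ((μ (X ⁻¹' {a})).toReal) := by
    refine (Finset.sum_filter_of_ne fun a _ h => ?_).symm
    intro h0; apply h; rw [h0]; simp
  have hYf : ∑ b : β, Real.negMulLog ((μ (Y ⁻¹' {b})).toReal)
      = ∑ b ∈ Finset.univ.filter (fun b => μ (Y ⁻¹' {b}) ≠ 0),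
          Real.negMulLog ((μ (Y ⁻¹' {b})).toReal) := by
    refine (Finset.sum_filter_of_ne fun b _ h => ?_).symm
    intro h0; apply h; rw [h0]; simp
  rw [hXf, hYf]
  refine Finset.sum_nbij' f g ?_ ?_ ?_ ?_ ?_
  · intro a ha
    simp only [Finset.mem_filter, Finset.mem_univ, true_and] at ha ⊢
    rw [(metamix_key hf hg a ha).2]; exact ha
  · intro b hb
    simp only [Finset.mem_filter, Finset.mem_univ, true_and] at hb ⊢
    rw [(metamix_key hg hf b hb).2]; exact hb
  · intro a ha
    simp only [Finset.mem_filter, Finset.mem_univ, true_and] at ha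
    exact (metamix_key hf hg a ha).1
  · intro b hb
    simp only [Finset.mem_filter, Finset.mem_univ, true_and] at hb
    exact (metamix_key hg hf b hb).1
  · intro a ha
    simp only [Finset.mem_filter, Finset.mem_univ, true_and] at ha
    rw [(metamix_key hf hg a ha).2]

lemma metamix_measure_sum {β : Type*} [Fintype β] [MeasurableSpace β]
    [MeasurableSingletonClass β]
    (μ : Measure Ω) [IsFiniteMeasure μ] {s : Set Ω} (hs : MeasurableSet s)
    {Y : Ω → β} (hY : Measurable Y) :
    (μ s).toReal = ∑ y, (μ (s ∩ Y ⁻¹' {y})).toReal := by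
  rw [← ENNReal.toReal_sum (fun y _ => measure_ne_top μ _)]
  congr 1
  rw [← measure_biUnion_finset ?_ (fun y _ => hs.inter (hY (measurableSet_singleton y)))]
  · refine congrArg _ ?_
    ext ω; simp
  · intro y _ y' _ hne
    simp only [Function.onFun]
    rw [Set.disjoint_left]
    rintro ω ⟨_, hy⟩ ⟨_, hy'⟩
    simp only [Set.mem_preimage, Set.mem_singleton_iff] at hy hy'
    exact hne (by rw [← hy, ← hy'])

lemma metamix_cmi_nonneg {α β γ : Type*} [Fintype α] [Fintype β] [Fintype γ]
    [MeasurableSpace α] [MeasurableSingletonClass α]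
    [MeasurableSpace β] [MeasurableSingletonClass β]
    [MeasurableSpace γ] [MeasurableSingletonClass γ]
    (μ : Measure Ω) [IsProbabilityMeasure μ]
    (X : Ω → α) (Y : Ω → β) (Z : Ω → γ)
    (hX : Measurable X) (hY : Measurable Y) (hZ : Measurable Z) :
    0 ≤ finCondMutualInfo μ X Y Z := by
  classical
  set p : α → β → γ → ℝ :=
    fun x y z => (μ (X ⁻¹' {x} ∩ Y ⁻¹' {y} ∩ Z ⁻¹' {z})).toReal with hp_def
  have hp0 : ∀ x y z, 0 ≤ p x y z := fun _ _ _ => ENNReal.toReal_nonneg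
  have hHZ : finEntropy μ Z = ∑ z, Real.negMulLog (∑ x, ∑ y, p x y z) := by
    unfold finEntropy
    refine Finset.sum_congr rfl fun z _ => ?_
    congr 1
    rw [metamix_measure_sum μ (hZ (measurableSet_singleton z)) hX]
    refine Finset.sum_congr rfl fun x _ => ?_
    rw [metamix_measure_sum μ ((hZ (measurableSet_singleton z)).inter
      (hX (measurableSet_singleton x))) hY]
    refine Finset.sum_congr rfl fun y _ => ?_
    congr 2
    ext ω; simp only [Set.mem_inter_iff, Set.mem_preimage, Set.mem_singleton_iff]; tauto
  have hHXZ : finEntropy μ (fun ω => (X ω, Z ω))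
      = ∑ x, ∑ z, Real.negMulLog (∑ y, p x y z) := by
    unfold finEntropy
    rw [Fintype.sum_prod_type]
    refine Finset.sum_congr rfl fun x _ => Finset.sum_congr rfl fun z _ => ?_
    congr 1
    have hpre : (fun ω => (X ω, Z ω)) ⁻¹' {(x, z)} = X ⁻¹' {x} ∩ Z ⁻¹' {z} := by
      ext ω; simp [Prod.ext_iff]
    rw [hpre, metamix_measure_sum μ ((hX (measurableSet_singleton x)).inter
      (hZ (measurableSet_singleton z))) hY]
    refine Finset.sum_congr rfl fun y _ => ?_
    congr 2
    ext ω; simp only [Set.mem_inter_iff, Set.mem_preimage, Set.mem_singleton_iff]; tauto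
  have hHYZ : finEntropy μ (fun ω => (Y ω, Z ω))
      = ∑ y, ∑ z, Real.negMulLog (∑ x, p x y z) := by
    unfold finEntropy
    rw [Fintype.sum_prod_type]
    refine Finset.sum_congr rfl fun y _ => Finset.sum_congr rfl fun z _ => ?_
    congr 1
    have hpre : (fun ω => (Y ω, Z ω)) ⁻¹' {(y, z)} = Y ⁻¹' {y} ∩ Z ⁻¹' {z} := by
      ext ω; simp [Prod.ext_iff]
    rw [hpre, metamix_measure_sum μ ((hY (measurableSet_singleton y)).inter
      (hZ (measurableSet_singleton z))) hX]
    refine Finset.sum_congr rfl fun x _ => ?_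
    congr 2
    ext ω; simp only [Set.mem_inter_iff, Set.mem_preimage, Set.mem_singleton_iff]; tauto
  have hHXYZ : finEntropy μ (fun ω => (X ω, (Y ω, Z ω)))
      = ∑ x, ∑ y, ∑ z, Real.negMulLog (p x y z) := by
    unfold finEntropy
    rw [Fintype.sum_prod_type]
    refine Finset.sum_congr rfl fun x _ => ?_
    rw [Fintype.sum_prod_type]
    refine Finset.sum_congr rfl fun y _ => Finset.sum_congr rfl fun z _ => ?_
    have hset : (fun ω => (X ω, (Y ω, Z ω))) ⁻¹' {(x, (y, z))}
        = X ⁻¹' {x} ∩ Y ⁻¹' {y} ∩ Z ⁻¹' {z} := by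
      ext ω
      simp only [Set.mem_preimage, Set.mem_singleton_iff, Set.mem_inter_iff, Prod.ext_iff]
      tauto
    rw [hset]
  have h2 : ∀ z : γ, Real.negMulLog (∑ x, ∑ y, p x y z)
      + ∑ x, ∑ y, Real.negMulLog (p x y z)
      ≤ ∑ x, Real.negMulLog (∑ y, p x y z) + ∑ y, Real.negMulLog (∑ x, p x y z) :=
    fun z => metamix_two_var (fun x y => p x y z) (fun x y => hp0 x y z)
  have hsum := Finset.sum_le_sum (fun z (_ : z ∈ Finset.univ) => h2 z)
  rw [Finset.sum_add_distrib, Finset.sum_add_distrib] at hsum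
  have r1 : ∑ z, ∑ x, ∑ y, Real.negMulLog (p x y z)
      = ∑ x, ∑ y, ∑ z, Real.negMulLog (p x y z) := by
    rw [Finset.sum_comm]
    exact Finset.sum_congr rfl fun x _ => Finset.sum_comm
  have r2 : ∑ z, ∑ x, Real.negMulLog (∑ y, p x y z)
      = ∑ x, ∑ z, Real.negMulLog (∑ y, p x y z) := Finset.sum_comm
  have r3 : ∑ z, ∑ y, Real.negMulLog (∑ x, p x y z)
      = ∑ y, ∑ z, Real.negMulLog (∑ x, p x y z) := Finset.sum_comm
  rw [r1, r2, r3] at hsum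
  simp only [finCondMutualInfo, finCondEntropy]
  rw [hHZ, hHXZ, hHYZ, hHXYZ]
  linarith

end Aux2

/-- **MetaMix increases the information between outer-loop targets and the support set.**
If `M = F(A, B)` a.s. and `(A, B)` is recoverable as `G(M, T)` a.s., then
`I(M ; S | T) − I(B ; S | T) = I(A ; S | (B, T))`, and in particular
`I(B ; S | T) ≤ I(M ; S | T)`. -/
theorem mixing_increases_information
    {Ω : Type*} [MeasurableSpace Ω] (μ : Measure Ω) [IsProbabilityMeasure μ]
    {αA αB αM αS αT : Type*}
    [Fintype αA] [Fintype αB] [Fintype αM] [Fintype αS] [Fintype αT]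
    [MeasurableSpace αA] [MeasurableSingletonClass αA]
    [MeasurableSpace αB] [MeasurableSingletonClass αB]
    [MeasurableSpace αM] [MeasurableSingletonClass αM]
    [MeasurableSpace αS] [MeasurableSingletonClass αS]
    [MeasurableSpace αT] [MeasurableSingletonClass αT]
    (A : Ω → αA) (B : Ω → αB) (M : Ω → αM) (S : Ω → αS) (T : Ω → αT)
    (hA : Measurable A) (hB : Measurable B) (hM : Measurable M)
    (hS : Measurable S) (hT : Measurable T)
    (F : αA × αB → αM) (G : αM × αT → αA × αB)
    (hF : ∀ᵐ ω ∂μ, M ω = F (A ω, B ω))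
    (hG : ∀ᵐ ω ∂μ, (A ω, B ω) = G (M ω, T ω)) :
    finCondMutualInfo μ M S T - finCondMutualInfo μ B S T
        = finCondMutualInfo μ A S (fun ω => (B ω, T ω))
      ∧ finCondMutualInfo μ B S T ≤ finCondMutualInfo μ M S T := by
  have e1 : finEntropy μ (fun ω => (M ω, T ω))
      = finEntropy μ (fun ω => (A ω, (B ω, T ω))) := by
    refine metamix_finEntropy_congr
      (fun mt => ((G mt).1, ((G mt).2, mt.2)))
      (fun abt => (F (abt.1, abt.2.1), abt.2.2)) ?_ ?_
    · filter_upwards [hG] with ω h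
      rw [← h]
    · filter_upwards [hF] with ω h
      rw [h]
  have e2 : finEntropy μ (fun ω => (M ω, (S ω, T ω)))
      = finEntropy μ (fun ω => (A ω, (S ω, (B ω, T ω)))) := by
    refine metamix_finEntropy_congr
      (fun mst => ((G (mst.1, mst.2.2)).1, (mst.2.1, ((G (mst.1, mst.2.2)).2, mst.2.2))))
      (fun asbt => (F (asbt.1, asbt.2.2.1), (asbt.2.1, asbt.2.2.2))) ?_ ?_
    · filter_upwards [hG] with ω h
      rw [← h]
    · filter_upwards [hF] with ω h
      rw [h]
  have e3 : finEntropy μ (fun ω => (B ω, (S ω, T ω)))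
      = finEntropy μ (fun ω => (S ω, (B ω, T ω))) := by
    refine metamix_finEntropy_congr
      (fun bst => (bst.2.1, (bst.1, bst.2.2)))
      (fun sbt => (sbt.2.1, (sbt.1, sbt.2.2)))
      (Filter.Eventually.of_forall fun ω => rfl)
      (Filter.Eventually.of_forall fun ω => rfl)
  have heq : finCondMutualInfo μ M S T - finCondMutualInfo μ B S T
      = finCondMutualInfo μ A S (fun ω => (B ω, T ω)) := by
    simp only [finCondMutualInfo, finCondEntropy]
    linarith [e1, e2, e3]
  refine ⟨heq, ?_⟩
  have hnn : 0 ≤ finCondMutualInfo μ A S (fun ω => (B ω, T ω)) :=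
    metamix_cmi_nonneg μ A S (fun ω => (B ω, T ω)) hA hS (hB.prodMk hT)
  linarith [heq, hnn]
end

section
/- Let (Ω, ℱ, P) be a probability space and let θ, S, Q, M be random variables on Ω taking values in finite sets. Suppose: (i) Q is independent of θ; (ii) Q is conditionally independent of θ given S; and (iii) there exist functions g and h such that M = g(S, Q) almost surely and S = h(M, Q) almost surely. Then I(θ ; M | Q) = H(θ) − H(θ | S) = I(θ ; S). -/
open MeasureTheory ProbabilityTheory

section helpers
variable {Ω : Type*} [MeasurableSpace Ω] {μ : Measure Ω}

lemma fe_congr_ae {α : Type*} [Fintype α] {X X' : Ω → α}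
    (hXX' : ∀ᵐ ω ∂μ, X ω = X' ω) : finEntropy μ X = finEntropy μ X' := by
  unfold finEntropy
  refine Finset.sum_congr rfl fun a _ => ?_
  have : μ (X ⁻¹' {a}) = μ (X' ⁻¹' {a}) :=
    measure_congr (Filter.eventuallyEq_set.2 (hXX'.mono fun ω h => by simp [h]))
  rw [this]

lemma fe_pair_fun {α β : Type*} [Fintype α] [Fintype β] (X : Ω → α) (f : α → β) :
    finEntropy μ (fun ω => (X ω, f (X ω))) = finEntropy μ X := by
  unfold finEntropy
  rw [Fintype.sum_prod_type]
  refine Finset.sum_congr rfl fun a _ => ?_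
  rw [Finset.sum_eq_single (f a)]
  · have : (fun ω => (X ω, f (X ω))) ⁻¹' {(a, f a)} = X ⁻¹' {a} := by
      ext ω
      simp only [Set.mem_preimage, Set.mem_singleton_iff, Prod.mk.injEq]
      exact ⟨fun h => h.1, fun h => ⟨h, by rw [h]⟩⟩
    rw [this]
  · intro b _ hb
    have : (fun ω => (X ω, f (X ω))) ⁻¹' {(a, b)} = ∅ := by
      ext ω
      simp only [Set.mem_preimage, Set.mem_singleton_iff, Prod.mk.injEq,
        Set.mem_empty_iff_false, iff_false, not_and]
      intro h1 h2
      exact hb (h2 ▸ (by rw [h1]))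
    rw [this]; simp
  · simp

lemma fe_pair_fun_left {α β : Type*} [Fintype α] [Fintype β] (X : Ω → α) (f : α → β) :
    finEntropy μ (fun ω => (f (X ω), X ω)) = finEntropy μ X := by
  unfold finEntropy
  rw [Fintype.sum_prod_type, Finset.sum_comm]
  refine Finset.sum_congr rfl fun a _ => ?_
  rw [Finset.sum_eq_single (f a)]
  · have : (fun ω => (f (X ω), X ω)) ⁻¹' {(f a, a)} = X ⁻¹' {a} := by
      ext ω
      simp only [Set.mem_preimage, Set.mem_singleton_iff, Prod.mk.injEq]
      exact ⟨fun h => h.2, fun h => ⟨by rw [h], h⟩⟩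
    rw [this]
  · intro b _ hb
    have : (fun ω => (f (X ω), X ω)) ⁻¹' {(b, a)} = ∅ := by
      ext ω
      simp only [Set.mem_preimage, Set.mem_singleton_iff, Prod.mk.injEq,
        Set.mem_empty_iff_false, iff_false, not_and]
      intro h1 h2
      exact hb (h1 ▸ (by rw [h2]))
    rw [this]; simp
  · simp

lemma fe_bij {α β : Type*} [Fintype α] [Fintype β] {X : Ω → α} {X' : Ω → β}
    (f : α → β) (f' : β → α)
    (h1 : ∀ᵐ ω ∂μ, X' ω = f (X ω)) (h2 : ∀ᵐ ω ∂μ, X ω = f' (X' ω)) :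
    finEntropy μ X' = finEntropy μ X := by
  have e1 : finEntropy μ (fun ω => (X ω, X' ω)) = finEntropy μ X := by
    refine (fe_congr_ae (h1.mono fun ω h => ?_)).trans (fe_pair_fun X f)
    rw [h]
  have e2 : finEntropy μ (fun ω => (X ω, X' ω)) = finEntropy μ X' := by
    refine (fe_congr_ae (h2.mono fun ω h => ?_)).trans (fe_pair_fun_left X' f')
    rw [← h]
  rw [← e1, e2]

lemma marginal_sum {α : Type*} [Fintype α] [MeasurableSpace α] [MeasurableSingletonClass α]
    [IsFiniteMeasure μ] {X : Ω → α} (hX : Measurable X) {A : Set Ω} (hA : MeasurableSet A) :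
    ∑ a : α, (μ (X ⁻¹' {a} ∩ A)).toReal = (μ A).toReal := by
  rw [← ENNReal.toReal_sum (fun a _ => measure_ne_top μ _)]
  congr 1
  rw [← measure_biUnion_finset (fun a _ b _ hab => by
        simp only [Function.onFun, Set.disjoint_left]
        rintro ω ⟨h1, -⟩ ⟨h2, -⟩
        exact hab ((Set.mem_singleton_iff.1 h1).symm.trans (Set.mem_singleton_iff.1 h2)))
      (fun a _ => (hX (measurableSet_singleton a)).inter hA)]
  congr 1
  ext ω
  simp

lemma total_sum {α : Type*} [Fintype α] [MeasurableSpace α] [MeasurableSingletonClass α]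
    [IsProbabilityMeasure μ] {X : Ω → α} (hX : Measurable X) :
    ∑ a : α, (μ (X ⁻¹' {a})).toReal = 1 := by
  have := marginal_sum (μ := μ) hX MeasurableSet.univ
  simpa using this

lemma sum_key {ι κ : Type*} [Fintype ι] [Fintype κ] (p : ℝ) (b : κ → ℝ) (c : ι → ℝ)
    (a : ι → κ → ℝ)
    (Hb : ∑ q, b q = p) (Hc : ∑ t, c t = p)
    (ha : ∀ t q, a t q * p = b q * c t)
    (h0 : p = 0 → (∀ t q, a t q = 0) ∧ (∀ q, b q = 0) ∧ (∀ t, c t = 0)) :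
    ∑ t, ∑ q, Real.negMulLog (a t q)
      = (∑ q, Real.negMulLog (b q)) + (∑ t, Real.negMulLog (c t)) - Real.negMulLog p := by
  by_cases hp : p = 0
  · obtain ⟨h1, h2, h3⟩ := h0 hp
    simp [h1, h2, h3, hp]
  · have haval : ∀ t q, a t q = b q * c t * p⁻¹ := fun t q => by
      field_simp
      exact ha t q
    have hinv : Real.negMulLog p⁻¹ = p⁻¹ * Real.log p := by
      simp [Real.negMulLog, Real.log_inv]
    have hpt : ∀ t q, Real.negMulLog (a t q)
        = (p⁻¹ * Real.negMulLog (b q)) * c t + ((p⁻¹ * Real.negMulLog (c t)) * b q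
          + (Real.log p * p⁻¹) * (b q * c t)) := by
      intro t q
      rw [haval, Real.negMulLog_mul, Real.negMulLog_mul, hinv]
      ring
    calc ∑ t, ∑ q, Real.negMulLog (a t q)
        = ∑ t, ∑ q, ((p⁻¹ * Real.negMulLog (b q)) * c t
            + ((p⁻¹ * Real.negMulLog (c t)) * b q
            + (Real.log p * p⁻¹) * (b q * c t))) :=
          Finset.sum_congr rfl fun t _ => Finset.sum_congr rfl fun q _ => hpt t q
      _ = ∑ t, ((∑ q, p⁻¹ * Real.negMulLog (b q)) * c t
            + ((p⁻¹ * Real.negMulLog (c t)) * p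
            + (Real.log p * p⁻¹) * (p * c t))) := by
          refine Finset.sum_congr rfl fun t _ => ?_
          rw [Finset.sum_add_distrib, ← Finset.sum_mul]
          congr 1
          rw [Finset.sum_add_distrib, ← Finset.mul_sum, Hb, ← Finset.mul_sum,
            ← Finset.sum_mul, Hb]
      _ = (∑ q, p⁻¹ * Real.negMulLog (b q)) * p + ((p⁻¹ * (∑ t, Real.negMulLog (c t))) * p
            + (Real.log p * p⁻¹) * (p * p)) := by
          rw [Finset.sum_add_distrib, ← Finset.mul_sum, Hc]
          congr 1
          rw [Finset.sum_add_distrib]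
          congr 1
          · rw [← Finset.sum_mul, ← Finset.mul_sum]
          · rw [← Finset.mul_sum, ← Finset.mul_sum, Hc]
      _ = (∑ q, Real.negMulLog (b q)) + (∑ t, Real.negMulLog (c t)) - Real.negMulLog p := by
          rw [← Finset.mul_sum]
          have : Real.negMulLog p = -p * Real.log p := rfl
          field_simp [this]
          rw [this]; ring

lemma fe_indep {α β : Type*} [Fintype α] [Fintype β]
    [MeasurableSpace α] [MeasurableSingletonClass α]
    [MeasurableSpace β] [MeasurableSingletonClass β]
    [IsProbabilityMeasure μ] {X : Ω → α} {Y : Ω → β}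
    (hX : Measurable X) (hY : Measurable Y) (hindep : IndepFun Y X μ) :
    finEntropy μ (fun ω => (X ω, Y ω)) = finEntropy μ X + finEntropy μ Y := by
  unfold finEntropy
  rw [Fintype.sum_prod_type]
  have key : ∀ (a : α) (b : β), (μ ((fun ω => (X ω, Y ω)) ⁻¹' {(a, b)})).toReal
      = (μ (X ⁻¹' {a})).toReal * (μ (Y ⁻¹' {b})).toReal := by
    intro a b
    have hset : (fun ω => (X ω, Y ω)) ⁻¹' {(a, b)} = Y ⁻¹' {b} ∩ X ⁻¹' {a} := by
      ext ω; simp [Prod.ext_iff]; tauto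
    rw [hset, hindep.measure_inter_preimage_eq_mul _ _ (measurableSet_singleton b)
      (measurableSet_singleton a), ENNReal.toReal_mul, mul_comm]
  have step : ∀ a : α, ∑ b : β, Real.negMulLog ((μ ((fun ω => (X ω, Y ω)) ⁻¹' {(a, b)})).toReal)
      = Real.negMulLog ((μ (X ⁻¹' {a})).toReal)
        + (μ (X ⁻¹' {a})).toReal * ∑ b : β, Real.negMulLog ((μ (Y ⁻¹' {b})).toReal) := by
    intro a
    calc ∑ b : β, Real.negMulLog ((μ ((fun ω => (X ω, Y ω)) ⁻¹' {(a, b)})).toReal)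
        = ∑ b : β, ((μ (Y ⁻¹' {b})).toReal * Real.negMulLog ((μ (X ⁻¹' {a})).toReal)
            + (μ (X ⁻¹' {a})).toReal * Real.negMulLog ((μ (Y ⁻¹' {b})).toReal)) := by
          refine Finset.sum_congr rfl fun b _ => ?_
          rw [key a b, Real.negMulLog_mul]
      _ = _ := by
          rw [Finset.sum_add_distrib, ← Finset.sum_mul, total_sum hY, one_mul,
            ← Finset.mul_sum]
  rw [Finset.sum_congr rfl fun a _ => step a, Finset.sum_add_distrib, ← Finset.sum_mul,
    total_sum hX, one_mul]

lemma fe_condindep {αθ αS αQ : Type*} [Fintype αθ] [Fintype αS] [Fintype αQ]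
    [MeasurableSpace αθ] [MeasurableSingletonClass αθ]
    [MeasurableSpace αS] [MeasurableSingletonClass αS]
    [MeasurableSpace αQ] [MeasurableSingletonClass αQ]
    [IsProbabilityMeasure μ] {θf : Ω → αθ} {S : Ω → αS} {Q : Ω → αQ}
    (hθ : Measurable θf) (hS : Measurable S) (hQ : Measurable Q)
    (hci : ∀ (q : αQ) (t : αθ) (s : αS),
      μ (Q ⁻¹' {q} ∩ θf ⁻¹' {t} ∩ S ⁻¹' {s}) * μ (S ⁻¹' {s})
        = μ (Q ⁻¹' {q} ∩ S ⁻¹' {s}) * μ (θf ⁻¹' {t} ∩ S ⁻¹' {s})) :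
    finEntropy μ (fun ω => (θf ω, (S ω, Q ω)))
      = finEntropy μ (fun ω => (S ω, Q ω)) + finEntropy μ (fun ω => (θf ω, S ω))
        - finEntropy μ S := by
  unfold finEntropy
  have e1 : ∀ (t : αθ) (s : αS) (q : αQ),
      (fun ω => (θf ω, (S ω, Q ω))) ⁻¹' {(t, (s, q))}
        = Q ⁻¹' {q} ∩ θf ⁻¹' {t} ∩ S ⁻¹' {s} := by
    intro t s q; ext ω; simp [Prod.ext_iff]; tauto
  have e2 : ∀ (s : αS) (q : αQ),
      (fun ω => (S ω, Q ω)) ⁻¹' {(s, q)} = Q ⁻¹' {q} ∩ S ⁻¹' {s} := by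
    intro s q; ext ω
    simp only [Set.mem_preimage, Set.mem_singleton_iff, Prod.mk.injEq, Set.mem_inter_iff]
    tauto
  have e3 : ∀ (t : αθ) (s : αS),
      (fun ω => (θf ω, S ω)) ⁻¹' {(t, s)} = θf ⁻¹' {t} ∩ S ⁻¹' {s} := by
    intro t s; ext ω
    simp only [Set.mem_preimage, Set.mem_singleton_iff, Prod.mk.injEq, Set.mem_inter_iff]
  simp only [Fintype.sum_prod_type]
  simp only [e1, e2, e3]
  rw [Finset.sum_comm]
  have key : ∀ s : αS,
      ∑ t : αθ, ∑ q : αQ, Real.negMulLog ((μ (Q ⁻¹' {q} ∩ θf ⁻¹' {t} ∩ S ⁻¹' {s})).toReal)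
        = (∑ q : αQ, Real.negMulLog ((μ (Q ⁻¹' {q} ∩ S ⁻¹' {s})).toReal))
          + (∑ t : αθ, Real.negMulLog ((μ (θf ⁻¹' {t} ∩ S ⁻¹' {s})).toReal))
          - Real.negMulLog ((μ (S ⁻¹' {s})).toReal) := by
    intro s
    refine sum_key _ _ _ _ ?_ ?_ ?_ ?_
    · exact marginal_sum hQ (hS (measurableSet_singleton s))
    · exact marginal_sum hθ (hS (measurableSet_singleton s))
    · intro t q
      rw [← ENNReal.toReal_mul, ← ENNReal.toReal_mul, hci q t s]
    · intro hp
      have hμs : μ (S ⁻¹' {s}) = 0 := by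
        have := (ENNReal.toReal_eq_zero_iff _).1 hp
        rcases this with h | h
        · exact h
        · exact absurd h (measure_ne_top μ _)
      refine ⟨fun t q => ?_, fun q => ?_, fun t => ?_⟩
      · rw [measure_mono_null Set.inter_subset_right hμs, ENNReal.toReal_zero]
      · rw [measure_mono_null Set.inter_subset_right hμs, ENNReal.toReal_zero]
      · rw [measure_mono_null Set.inter_subset_right hμs, ENNReal.toReal_zero]
  calc ∑ s : αS, ∑ t : αθ, ∑ q : αQ,
        Real.negMulLog ((μ (Q ⁻¹' {q} ∩ θf ⁻¹' {t} ∩ S ⁻¹' {s})).toReal)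
      = ∑ s : αS, ((∑ q : αQ, Real.negMulLog ((μ (Q ⁻¹' {q} ∩ S ⁻¹' {s})).toReal))
          + (∑ t : αθ, Real.negMulLog ((μ (θf ⁻¹' {t} ∩ S ⁻¹' {s})).toReal))
          - Real.negMulLog ((μ (S ⁻¹' {s})).toReal)) :=
        Finset.sum_congr rfl fun s _ => key s
    _ = _ := by
        rw [Finset.sum_sub_distrib, Finset.sum_add_distrib]
        congr 1
        congr 1
        rw [Finset.sum_comm]

end helpers

/-- **MetaMix contributes the full support-set information to the initialization.**
If (i) `Q` is independent of `θ`, (ii) `Q` is conditionally independent of `θ` given `S`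
(stated elementarily on atoms), and (iii) `M = g(S, Q)` a.s. with `S = h(M, Q)` a.s., then
`I(θ ; M | Q) = H(θ) − H(θ | S) = I(θ ; S)`. -/
theorem metamix_information_contribution
    {Ω : Type*} [MeasurableSpace Ω] (μ : Measure Ω) [IsProbabilityMeasure μ]
    {αθ αS αQ αM : Type*}
    [Fintype αθ] [Fintype αS] [Fintype αQ] [Fintype αM]
    [MeasurableSpace αθ] [MeasurableSingletonClass αθ]
    [MeasurableSpace αS] [MeasurableSingletonClass αS]
    [MeasurableSpace αQ] [MeasurableSingletonClass αQ]
    [MeasurableSpace αM] [MeasurableSingletonClass αM]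
    (θf : Ω → αθ) (S : Ω → αS) (Q : Ω → αQ) (M : Ω → αM)
    (hθ : Measurable θf) (hS : Measurable S) (hQ : Measurable Q) (hM : Measurable M)
    (hindep : IndepFun Q θf μ)
    (hcondindep : ∀ (q : αQ) (t : αθ) (s : αS),
      μ (Q ⁻¹' {q} ∩ θf ⁻¹' {t} ∩ S ⁻¹' {s}) * μ (S ⁻¹' {s})
        = μ (Q ⁻¹' {q} ∩ S ⁻¹' {s}) * μ (θf ⁻¹' {t} ∩ S ⁻¹' {s}))
    (g : αS × αQ → αM) (h : αM × αQ → αS)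
    (hg : ∀ᵐ ω ∂μ, M ω = g (S ω, Q ω))
    (hh : ∀ᵐ ω ∂μ, S ω = h (M ω, Q ω)) :
    finCondMutualInfo μ θf M Q = finEntropy μ θf - finCondEntropy μ θf S
      ∧ finCondMutualInfo μ θf M Q = finMutualInfo μ θf S := by
  have hMQ_SQ : finEntropy μ (fun ω => (M ω, Q ω)) = finEntropy μ (fun ω => (S ω, Q ω)) := by
    refine fe_bij (fun p : αS × αQ => (g p, p.2)) (fun p : αM × αQ => (h p, p.2))
      (hg.mono fun ω hgω => ?_) (hh.mono fun ω hhω => ?_)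
    · simp [hgω]
    · simp [← hhω]
  have hθMQ : finEntropy μ (fun ω => (θf ω, (M ω, Q ω)))
      = finEntropy μ (fun ω => (θf ω, (S ω, Q ω))) := by
    refine fe_bij (fun p : αθ × (αS × αQ) => (p.1, (g p.2, p.2.2)))
      (fun p : αθ × (αM × αQ) => (p.1, (h p.2, p.2.2)))
      (hg.mono fun ω hgω => ?_) (hh.mono fun ω hhω => ?_)
    · simp [hgω]
    · simp [← hhω]
  have HθQ : finEntropy μ (fun ω => (θf ω, Q ω)) = finEntropy μ θf + finEntropy μ Q :=
    fe_indep hθ hQ hindep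
  have Hcond : finEntropy μ (fun ω => (θf ω, (S ω, Q ω)))
      = finEntropy μ (fun ω => (S ω, Q ω)) + finEntropy μ (fun ω => (θf ω, S ω))
        - finEntropy μ S :=
    fe_condindep hθ hS hQ hcondindep
  have main : finCondMutualInfo μ θf M Q = finEntropy μ θf - finCondEntropy μ θf S := by
    simp only [finCondMutualInfo, finCondEntropy]
    rw [hθMQ, hMQ_SQ, HθQ, Hcond]
    ring
  exact ⟨main, main⟩
end

section
/- Let (Ω, ℱ, P) be a probability space and let θ, S, Q, Φ, M be random variables on Ω taking values in finite sets. Suppose: (i) Q is independent of θ; (ii) Q is conditionally independent of θ given (S, Φ); and (iii) there exist functions g and h such that M = g(S, Q, Φ) almost surely and (S, Φ) = h(M, Q) almost surely. Then I(θ ; M | Q) = H(θ) − H(θ | S, Φ) ≥ H(θ) − H(θ | S). -/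
open MeasureTheory ProbabilityTheory

-- ===== auxiliary pure lemmas =====

lemma aux_sum_negMulLog_reindex {β β' : Type*} [Fintype β] [Fintype β']
    [DecidableEq β] [DecidableEq β']
    (p : β' → ℝ) (F : β' → β) (G : β → β') (hK : ∀ b', p b' ≠ 0 → G (F b') = b') :
    ∑ b : β, Real.negMulLog (∑ b' : β', if F b' = b then p b' else 0)
      = ∑ b' : β', Real.negMulLog (p b') := by
  have hinner : ∀ b : β, (∑ b' : β', if F b' = b then p b' else 0)
      = if F (G b) = b then p (G b) else 0 := by
    intro b
    have hterm : ∀ b' : β', (if F b' = b then p b' else 0)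
        = if b' = G b ∧ F (G b) = b then p b' else 0 := by
      intro b'
      by_cases h1 : F b' = b
      · by_cases h2 : p b' = 0
        · by_cases h3 : b' = G b ∧ F (G b) = b <;> simp [h1, h2, h3]
        · have hgb := hK b' h2
          subst h1
          simp [hgb]
      · have : ¬ (b' = G b ∧ F (G b) = b) := by
          rintro ⟨rfl, h2⟩; exact h1 h2
        simp [h1, this]
    rw [Finset.sum_congr rfl (fun b' _ => hterm b')]
    by_cases h2 : F (G b) = b
    · simp [h2]
    · simp [h2]
  rw [Finset.sum_congr rfl (fun b _ => by rw [hinner b])]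
  have lhs_eq : ∀ b : β, Real.negMulLog (if F (G b) = b then p (G b) else 0)
      = if F (G b) = b then Real.negMulLog (p (G b)) else 0 := by
    intro b; split <;> simp [Real.negMulLog_zero]
  rw [Finset.sum_congr rfl (fun b _ => lhs_eq b)]
  rw [Finset.sum_ite, Finset.sum_const_zero, add_zero]
  rw [show (∑ b' : β', Real.negMulLog (p b'))
      = ∑ b' ∈ Finset.univ.filter (fun b' => G (F b') = b'), Real.negMulLog (p b') by
    symm
    apply Finset.sum_filter_of_ne
    intro b' _ hne
    apply hK
    intro h0
    exact hne (by simp [h0, Real.negMulLog_zero])]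
  apply Finset.sum_nbij' (fun b => G b) (fun b' => F b')
  · intro b hb; simp only [Finset.mem_filter, Finset.mem_univ, true_and] at hb ⊢
    rw [hb]
  · intro b' hb'; simp only [Finset.mem_filter, Finset.mem_univ, true_and] at hb' ⊢
    rw [hb']
  · intro b hb; simp only [Finset.mem_filter, Finset.mem_univ, true_and] at hb; exact hb
  · intro b' hb'; simp only [Finset.mem_filter, Finset.mem_univ, true_and] at hb'; exact hb'
  · intro b hb; rfl

lemma aux_sum_negMulLog_indep {α β : Type*} [Fintype α] [Fintype β]
    (a : α → ℝ) (b : β → ℝ) (ha : ∑ t, a t = 1) (hb : ∑ q, b q = 1) :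
    ∑ t, ∑ q, Real.negMulLog (a t * b q)
      = ∑ t, Real.negMulLog (a t) + ∑ q, Real.negMulLog (b q) := by
  have : ∀ t q, Real.negMulLog (a t * b q)
      = b q * Real.negMulLog (a t) + a t * Real.negMulLog (b q) := fun t q =>
    Real.negMulLog_mul (a t) (b q)
  simp only [this, Finset.sum_add_distrib, ← Finset.mul_sum, ← Finset.sum_mul]
  rw [ha, hb]
  ring_nf

lemma aux_sum_negMulLog_condindep {α β γ : Type*} [Fintype α] [Fintype β] [Fintype γ]
    (p : α → β → γ → ℝ) (hp : ∀ t r q, 0 ≤ p t r q)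
    (hci : ∀ t r q, p t r q * (∑ t', ∑ q', p t' r q')
      = (∑ q', p t r q') * (∑ t', p t' r q)) :
    (∑ t, ∑ r, ∑ q, Real.negMulLog (p t r q)) + ∑ r, Real.negMulLog (∑ t, ∑ q, p t r q)
      = (∑ t, ∑ r, Real.negMulLog (∑ q, p t r q))
        + ∑ r, ∑ q, Real.negMulLog (∑ t, p t r q) := by
  have e1 : ∑ r, Real.negMulLog (∑ t, ∑ q, p t r q)
      = ∑ t, ∑ r, ∑ q, (-(p t r q) * Real.log (∑ t', ∑ q', p t' r q')) := by
    rw [Finset.sum_comm]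
    refine Finset.sum_congr rfl fun r _ => ?_
    rw [Real.negMulLog, ← Finset.sum_neg_distrib, Finset.sum_mul]
    refine Finset.sum_congr rfl fun t _ => ?_
    rw [← Finset.sum_neg_distrib, Finset.sum_mul]
  have e3 : ∑ t, ∑ r, Real.negMulLog (∑ q, p t r q)
      = ∑ t, ∑ r, ∑ q, (-(p t r q) * Real.log (∑ q', p t r q')) := by
    refine Finset.sum_congr rfl fun t _ => Finset.sum_congr rfl fun r _ => ?_
    rw [Real.negMulLog, ← Finset.sum_neg_distrib, Finset.sum_mul]
  have e4 : ∑ r, ∑ q, Real.negMulLog (∑ t, p t r q)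
      = ∑ t, ∑ r, ∑ q, (-(p t r q) * Real.log (∑ t', p t' r q)) := by
    calc ∑ r, ∑ q, Real.negMulLog (∑ t, p t r q)
        = ∑ r, ∑ q, ∑ t, (-(p t r q) * Real.log (∑ t', p t' r q)) :=
          Finset.sum_congr rfl fun r _ => Finset.sum_congr rfl fun q _ => by
            rw [Real.negMulLog, ← Finset.sum_neg_distrib, Finset.sum_mul]
      _ = ∑ r, ∑ t, ∑ q, (-(p t r q) * Real.log (∑ t', p t' r q)) :=
          Finset.sum_congr rfl fun r _ => Finset.sum_comm
      _ = ∑ t, ∑ r, ∑ q, (-(p t r q) * Real.log (∑ t', p t' r q)) := Finset.sum_comm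
  have e0 : ∑ t, ∑ r, ∑ q, Real.negMulLog (p t r q)
      = ∑ t, ∑ r, ∑ q, (-(p t r q) * Real.log (p t r q)) := by
    simp [Real.negMulLog]
  rw [e0, e1, e3, e4, ← Finset.sum_add_distrib, ← Finset.sum_add_distrib]
  refine Finset.sum_congr rfl fun t _ => ?_
  rw [← Finset.sum_add_distrib, ← Finset.sum_add_distrib]
  refine Finset.sum_congr rfl fun r _ => ?_
  rw [← Finset.sum_add_distrib, ← Finset.sum_add_distrib]
  refine Finset.sum_congr rfl fun q _ => ?_
  rcases eq_or_lt_of_le (hp t r q) with h0 | h0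
  · simp [← h0]
  · have hptr : 0 < ∑ q', p t r q' :=
      lt_of_lt_of_le h0 (Finset.single_le_sum (fun q' _ => hp t r q') (Finset.mem_univ q))
    have hprq : 0 < ∑ t', p t' r q :=
      lt_of_lt_of_le h0 (Finset.single_le_sum (fun t' _ => hp t' r q) (Finset.mem_univ t))
    have hpr : 0 < ∑ t', ∑ q', p t' r q' := by
      refine lt_of_lt_of_le hptr (Finset.single_le_sum (f := fun t' => ∑ q', p t' r q')
        (fun t' _ => Finset.sum_nonneg fun q' _ => hp t' r q') (Finset.mem_univ t))
    have hlog : Real.log (p t r q) + Real.log (∑ t', ∑ q', p t' r q')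
        = Real.log (∑ q', p t r q') + Real.log (∑ t', p t' r q) := by
      rw [← Real.log_mul (ne_of_gt h0) (ne_of_gt hpr),
        ← Real.log_mul (ne_of_gt hptr) (ne_of_gt hprq), hci t r q]
    linear_combination (-(p t r q)) * hlog

lemma aux_sum_negMulLog_submod {α β γ : Type*} [Fintype α] [Fintype β] [Fintype γ]
    (p : α → β → γ → ℝ) (hp : ∀ t s f, 0 ≤ p t s f) :
    (∑ t, ∑ s, ∑ f, Real.negMulLog (p t s f)) + ∑ s, Real.negMulLog (∑ t, ∑ f, p t s f)
      ≤ (∑ t, ∑ s, Real.negMulLog (∑ f, p t s f))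
        + ∑ s, ∑ f, Real.negMulLog (∑ t, p t s f) := by
  classical
  set Pts : α → β → ℝ := fun t s => ∑ f, p t s f with hPts
  set Psf : β → γ → ℝ := fun s f => ∑ t, p t s f with hPsf
  set Ps : β → ℝ := fun s => ∑ t, ∑ f, p t s f with hPs
  have e1 : ∑ s, Real.negMulLog (Ps s)
      = ∑ t, ∑ s, ∑ f, (-(p t s f) * Real.log (Ps s)) := by
    rw [Finset.sum_comm]
    refine Finset.sum_congr rfl fun s _ => ?_
    rw [Real.negMulLog, hPs, ← Finset.sum_neg_distrib, Finset.sum_mul]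
    refine Finset.sum_congr rfl fun t _ => ?_
    rw [← Finset.sum_neg_distrib, Finset.sum_mul]
  have e3 : ∑ t, ∑ s, Real.negMulLog (Pts t s)
      = ∑ t, ∑ s, ∑ f, (-(p t s f) * Real.log (Pts t s)) := by
    refine Finset.sum_congr rfl fun t _ => Finset.sum_congr rfl fun s _ => ?_
    rw [Real.negMulLog, hPts, ← Finset.sum_neg_distrib, Finset.sum_mul]
  have e4 : ∑ s, ∑ f, Real.negMulLog (Psf s f)
      = ∑ t, ∑ s, ∑ f, (-(p t s f) * Real.log (Psf s f)) := by
    calc ∑ s, ∑ f, Real.negMulLog (Psf s f)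
        = ∑ s, ∑ f, ∑ t, (-(p t s f) * Real.log (Psf s f)) :=
          Finset.sum_congr rfl fun s _ => Finset.sum_congr rfl fun f _ => by
            rw [Real.negMulLog, hPsf, ← Finset.sum_neg_distrib, Finset.sum_mul]
      _ = ∑ s, ∑ t, ∑ f, (-(p t s f) * Real.log (Psf s f)) :=
          Finset.sum_congr rfl fun s _ => Finset.sum_comm
      _ = ∑ t, ∑ s, ∑ f, (-(p t s f) * Real.log (Psf s f)) := Finset.sum_comm
  have e0 : ∑ t, ∑ s, ∑ f, Real.negMulLog (p t s f)
      = ∑ t, ∑ s, ∑ f, (-(p t s f) * Real.log (p t s f)) := by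
    simp [Real.negMulLog]
  rw [e0, e1, e3, e4]
  set c : α → β → γ → ℝ :=
    fun t s f => if 0 < Ps s then Pts t s * Psf s f / Ps s else 0 with hc
  have hPts_nonneg : ∀ t s, 0 ≤ Pts t s := fun t s =>
    Finset.sum_nonneg fun f _ => hp t s f
  have hPsf_nonneg : ∀ s f, 0 ≤ Psf s f := fun s f =>
    Finset.sum_nonneg fun t _ => hp t s f
  have hPs_nonneg : ∀ s, 0 ≤ Ps s := fun s =>
    Finset.sum_nonneg fun t _ => Finset.sum_nonneg fun f _ => hp t s f
  have hc_nonneg : ∀ t s f, 0 ≤ c t s f := by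
    intro t s f
    simp only [hc]
    split
    · rename_i hps
      exact div_nonneg (mul_nonneg (hPts_nonneg t s) (hPsf_nonneg s f)) (le_of_lt hps)
    · exact le_rfl
  have key1 : ∀ t s f, p t s f - c t s f
      ≤ (-(p t s f) * Real.log (Pts t s) + -(p t s f) * Real.log (Psf s f))
        - (-(p t s f) * Real.log (p t s f) + -(p t s f) * Real.log (Ps s)) := by
    intro t s f
    rcases eq_or_lt_of_le (hp t s f) with h0 | h0
    · have := hc_nonneg t s f
      simp [← h0]
      linarith
    · have hpts : 0 < Pts t s :=
        lt_of_lt_of_le h0 (Finset.single_le_sum (fun f' _ => hp t s f') (Finset.mem_univ f))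
      have hpsf : 0 < Psf s f :=
        lt_of_lt_of_le h0 (Finset.single_le_sum (fun t' _ => hp t' s f) (Finset.mem_univ t))
      have hps : 0 < Ps s := by
        refine lt_of_lt_of_le hpts (Finset.single_le_sum (f := fun t' => ∑ f', p t' s f')
          (fun t' _ => Finset.sum_nonneg fun f' _ => hp t' s f') (Finset.mem_univ t))
      have hceq : c t s f = Pts t s * Psf s f / Ps s := by simp only [hc]; simp [hps]
      have hcpos : 0 < c t s f := by rw [hceq]; positivity
      have hlogc : Real.log (c t s f) = Real.log (Pts t s) + Real.log (Psf s f)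
          - Real.log (Ps s) := by
        rw [hceq, Real.log_div (by positivity) (ne_of_gt hps),
          Real.log_mul (ne_of_gt hpts) (ne_of_gt hpsf)]
      have hineq : Real.log (c t s f) - Real.log (p t s f) ≤ c t s f / p t s f - 1 := by
        have h1 : Real.log (c t s f / p t s f) ≤ c t s f / p t s f - 1 :=
          Real.log_le_sub_one_of_pos (by positivity)
        rwa [Real.log_div (ne_of_gt hcpos) (ne_of_gt h0)] at h1
      have h2 : p t s f * (Real.log (c t s f) - Real.log (p t s f))
          ≤ p t s f * (c t s f / p t s f - 1) :=
        mul_le_mul_of_nonneg_left hineq (le_of_lt h0)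
      have h3 : p t s f * (c t s f / p t s f - 1) = c t s f - p t s f := by
        field_simp
      rw [h3] at h2
      rw [hlogc] at h2
      nlinarith [h2]
  have key2 : ∑ t, ∑ s, ∑ f, (p t s f - c t s f) = 0 := by
    rw [show ∑ t, ∑ s, ∑ f, (p t s f - c t s f)
        = ∑ s, ∑ t, ∑ f, (p t s f - c t s f) from Finset.sum_comm]
    refine Finset.sum_eq_zero fun s _ => ?_
    have hsplit : ∑ t, ∑ f, (p t s f - c t s f)
        = Ps s - ∑ t, ∑ f, c t s f := by
      rw [hPs]
      simp [Finset.sum_sub_distrib]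
    rw [hsplit]
    have hcs : ∑ t, ∑ f, c t s f = if 0 < Ps s then Ps s else 0 := by
      simp only [hc]
      by_cases hps : 0 < Ps s
      · simp only [hps, if_true]
        have : ∀ t, ∑ f, Pts t s * Psf s f / Ps s = Pts t s * Ps s / Ps s := by
          intro t
          rw [← Finset.sum_div, ← Finset.mul_sum]
          congr 1
          congr 1
          rw [hPsf, hPs]
          exact Finset.sum_comm
        rw [Finset.sum_congr rfl fun t _ => this t]
        rw [← Finset.sum_div, ← Finset.sum_mul]
        rw [show (∑ t, Pts t s) = Ps s from rfl]
        field_simp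
      · simp only [hps, if_false]
        exact Finset.sum_eq_zero fun t _ => Finset.sum_eq_zero fun f _ => rfl
    rw [hcs]
    by_cases hps : 0 < Ps s
    · simp [hps]
    · have : Ps s = 0 := le_antisymm (not_lt.mp hps) (hPs_nonneg s)
      simp [hps, this]
  have main : (0:ℝ) ≤ ∑ t, ∑ s, ∑ f,
      ((-(p t s f) * Real.log (Pts t s) + -(p t s f) * Real.log (Psf s f))
        - (-(p t s f) * Real.log (p t s f) + -(p t s f) * Real.log (Ps s))) := by
    rw [← key2]
    exact Finset.sum_le_sum fun t _ => Finset.sum_le_sum fun s _ =>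
      Finset.sum_le_sum fun f _ => key1 t s f
  simp only [Finset.sum_sub_distrib, Finset.sum_add_distrib] at main
  linarith

lemma aux_toReal_sum_fiber {Ω : Type*} [MeasurableSpace Ω] {μ : Measure Ω}
    [IsProbabilityMeasure μ]
    {β : Type*} [Fintype β] [MeasurableSpace β] [MeasurableSingletonClass β]
    {A : Set Ω} (hA : MeasurableSet A) {Y : Ω → β} (hY : Measurable Y) :
    ∑ b : β, (μ (A ∩ Y ⁻¹' {b})).toReal = (μ A).toReal := by
  have hU : A = ⋃ b : β, A ∩ Y ⁻¹' {b} := by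
    ext ω; simp
  have hdisj : Pairwise (Function.onFun Disjoint fun b : β => A ∩ Y ⁻¹' {b}) := by
    intro b b' hbb'
    simp only [Function.onFun]
    apply Set.disjoint_left.mpr
    rintro ω ⟨-, h1⟩ ⟨-, h2⟩
    exact hbb' (h1.symm.trans h2)
  have hmeas : ∀ b : β, MeasurableSet (A ∩ Y ⁻¹' {b}) := fun b =>
    hA.inter (hY (MeasurableSet.singleton b))
  have : μ A = ∑' b : β, μ (A ∩ Y ⁻¹' {b}) := by
    conv_lhs => rw [hU]
    exact measure_iUnion hdisj hmeas
  rw [this, tsum_fintype, ENNReal.toReal_sum]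
  intro b _
  exact measure_ne_top μ _

lemma aux_sum_toReal_measure_preimage {Ω : Type*} [MeasurableSpace Ω] {μ : Measure Ω}
    [IsProbabilityMeasure μ]
    {β : Type*} [Fintype β] [MeasurableSpace β] [MeasurableSingletonClass β]
    {Y : Ω → β} (hY : Measurable Y) :
    ∑ b : β, (μ (Y ⁻¹' {b})).toReal = 1 := by
  have := aux_toReal_sum_fiber (μ := μ) MeasurableSet.univ hY
  simp only [Set.univ_inter] at this
  rw [this, measure_univ, ENNReal.toReal_one]

lemma aux_measure_preimage_congr {Ω : Type*} [MeasurableSpace Ω] {μ : Measure Ω}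
    {α : Type*} {X X' : Ω → α} (hXX' : ∀ᵐ ω ∂μ, X ω = X' ω) (s : Set α) :
    μ (X ⁻¹' s) = μ (X' ⁻¹' s) := by
  apply measure_congr
  filter_upwards [hXX'] with ω hω
  show (X ω ∈ s) = (X' ω ∈ s)
  rw [hω]

lemma aux_finEntropy_congr_of_inv {Ω : Type*} [MeasurableSpace Ω] {μ : Measure Ω}
    [IsProbabilityMeasure μ]
    {β β' : Type*} [Fintype β] [Fintype β']
    [MeasurableSpace β] [MeasurableSingletonClass β]
    [MeasurableSpace β'] [MeasurableSingletonClass β']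
    {W : Ω → β} {W' : Ω → β'} (hW' : Measurable W')
    (F : β' → β) (G : β → β')
    (h1 : ∀ᵐ ω ∂μ, W ω = F (W' ω)) (h2 : ∀ᵐ ω ∂μ, W' ω = G (W ω)) :
    finEntropy μ W = finEntropy μ W' := by
  classical
  set p : β' → ℝ := fun b' => (μ (W' ⁻¹' {b'})).toReal with hp
  have hK : ∀ b', p b' ≠ 0 → G (F b') = b' := by
    intro b' hb'
    by_contra hne
    apply hb'
    have h3 : ∀ᵐ ω ∂μ, W' ω ≠ b' := by
      filter_upwards [h1, h2] with ω e1 e2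
      intro hb
      exact hne (by rw [← hb, ← e1, ← e2, hb])
    have h4 : μ (W' ⁻¹' {b'}) = 0 := by
      have := ae_iff.mp h3
      simpa [Set.preimage, Set.mem_singleton_iff] using this
    simp [hp, h4]
  have hfib : ∀ b : β, (μ (W ⁻¹' {b})).toReal
      = ∑ b' : β', if F b' = b then p b' else 0 := by
    intro b
    have hWF : μ (W ⁻¹' {b}) = μ ((fun ω => F (W' ω)) ⁻¹' {b}) :=
      aux_measure_preimage_congr h1 {b}
    have hset : ∀ b' : β', ((fun ω => F (W' ω)) ⁻¹' {b}) ∩ W' ⁻¹' {b'}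
        = if F b' = b then W' ⁻¹' {b'} else ∅ := by
      intro b'
      split
      · rename_i hFb
        ext ω
        simp only [Set.mem_inter_iff, Set.mem_preimage, Set.mem_singleton_iff]
        constructor
        · rintro ⟨-, h⟩; exact h
        · intro h; exact ⟨by rw [h, hFb], h⟩
      · rename_i hFb
        ext ω
        simp only [Set.mem_inter_iff, Set.mem_preimage, Set.mem_singleton_iff,
          Set.mem_empty_iff_false, iff_false]
        rintro ⟨hb, hb'⟩
        exact hFb (by rw [← hb, hb'])
    have hAmeas : MeasurableSet ((fun ω => F (W' ω)) ⁻¹' {b}) := by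
      have : (fun ω => F (W' ω)) ⁻¹' {b} = W' ⁻¹' (F ⁻¹' {b}) := rfl
      rw [this]
      exact hW' (Set.Finite.measurableSet (Set.toFinite _))
    have := aux_toReal_sum_fiber (μ := μ) hAmeas hW'
    rw [hWF, ← this]
    refine Finset.sum_congr rfl fun b' _ => ?_
    rw [hset b']
    split
    · rfl
    · simp
  calc finEntropy μ W
      = ∑ b : β, Real.negMulLog (∑ b' : β', if F b' = b then p b' else 0) := by
        unfold finEntropy
        exact Finset.sum_congr rfl fun b _ => by rw [hfib b]
    _ = ∑ b' : β', Real.negMulLog (p b') := aux_sum_negMulLog_reindex p F G hK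
    _ = finEntropy μ W' := rfl

/-- **MMCF (MetaMix + Channel Shuffle) contributes at least as much information as MetaMix.**
If (i) `Q` is independent of `θ`, (ii) `Q` is conditionally independent of `θ` given
`(S, Φ)` (stated elementarily on atoms), and (iii) `M = g(S, Q, Φ)` a.s. with
`(S, Φ) = h(M, Q)` a.s., then
`I(θ ; M | Q) = H(θ) − H(θ | (S, Φ)) ≥ H(θ) − H(θ | S)`. -/
theorem mmcf_information_contribution
    {Ω : Type*} [MeasurableSpace Ω] (μ : Measure Ω) [IsProbabilityMeasure μ]
    {αθ αS αQ αΦ αM : Type*}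
    [Fintype αθ] [Fintype αS] [Fintype αQ] [Fintype αΦ] [Fintype αM]
    [MeasurableSpace αθ] [MeasurableSingletonClass αθ]
    [MeasurableSpace αS] [MeasurableSingletonClass αS]
    [MeasurableSpace αQ] [MeasurableSingletonClass αQ]
    [MeasurableSpace αΦ] [MeasurableSingletonClass αΦ]
    [MeasurableSpace αM] [MeasurableSingletonClass αM]
    (θf : Ω → αθ) (S : Ω → αS) (Q : Ω → αQ) (Φ : Ω → αΦ) (M : Ω → αM)
    (hθ : Measurable θf) (hS : Measurable S) (hQ : Measurable Q)
    (hΦ : Measurable Φ) (hM : Measurable M)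
    (hindep : IndepFun Q θf μ)
    (hcondindep : ∀ (q : αQ) (t : αθ) (s : αS) (f : αΦ),
      μ (Q ⁻¹' {q} ∩ θf ⁻¹' {t} ∩ (S ⁻¹' {s} ∩ Φ ⁻¹' {f}))
          * μ (S ⁻¹' {s} ∩ Φ ⁻¹' {f})
        = μ (Q ⁻¹' {q} ∩ (S ⁻¹' {s} ∩ Φ ⁻¹' {f}))
          * μ (θf ⁻¹' {t} ∩ (S ⁻¹' {s} ∩ Φ ⁻¹' {f})))
    (g : αS × αQ × αΦ → αM) (h : αM × αQ → αS × αΦ)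
    (hg : ∀ᵐ ω ∂μ, M ω = g (S ω, Q ω, Φ ω))
    (hh : ∀ᵐ ω ∂μ, (S ω, Φ ω) = h (M ω, Q ω)) :
    finCondMutualInfo μ θf M Q
        = finEntropy μ θf - finCondEntropy μ θf (fun ω => (S ω, Φ ω))
      ∧ finEntropy μ θf - finCondEntropy μ θf S
        ≤ finEntropy μ θf - finCondEntropy μ θf (fun ω => (S ω, Φ ω)) := by
  classical
  set R : Ω → αS × αΦ := fun ω => (S ω, Φ ω) with hRdef
  have hRmeas : Measurable R := hS.prodMk hΦ
  have hRpre : ∀ r : αS × αΦ, R ⁻¹' {r} = S ⁻¹' {r.1} ∩ Φ ⁻¹' {r.2} := by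
    intro r; ext ω
    simp [hRdef, Prod.ext_iff]
  -- measurable-set shorthands
  have msθ : ∀ t : αθ, MeasurableSet (θf ⁻¹' {t}) := fun t => hθ (MeasurableSet.singleton t)
  have msS : ∀ s : αS, MeasurableSet (S ⁻¹' {s}) := fun s => hS (MeasurableSet.singleton s)
  have msΦ : ∀ f : αΦ, MeasurableSet (Φ ⁻¹' {f}) := fun f => hΦ (MeasurableSet.singleton f)
  have msQ : ∀ q : αQ, MeasurableSet (Q ⁻¹' {q}) := fun q => hQ (MeasurableSet.singleton q)
  -- ===== Piece 1 : independence gives H(θ,Q) = H(θ) + H(Q) =====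
  have HθQ : finEntropy μ (fun ω => (θf ω, Q ω)) = finEntropy μ θf + finEntropy μ Q := by
    have hterm : ∀ (t : αθ) (q : αQ),
        ((μ ((fun ω => (θf ω, Q ω)) ⁻¹' {(t, q)})).toReal)
          = (μ (θf ⁻¹' {t})).toReal * (μ (Q ⁻¹' {q})).toReal := by
      intro t q
      have h1 : (fun ω => (θf ω, Q ω)) ⁻¹' {(t, q)} = Q ⁻¹' {q} ∩ θf ⁻¹' {t} := by
        ext ω
        simp only [Set.mem_preimage, Set.mem_singleton_iff, Prod.ext_iff, Set.mem_inter_iff]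
        try tauto
      rw [h1, hindep.measure_inter_preimage_eq_mul _ _ (MeasurableSet.singleton q)
          (MeasurableSet.singleton t), ENNReal.toReal_mul, mul_comm]
    unfold finEntropy
    rw [Fintype.sum_prod_type]
    calc ∑ t, ∑ q, Real.negMulLog ((μ ((fun ω => (θf ω, Q ω)) ⁻¹' {(t, q)})).toReal)
        = ∑ t, ∑ q, Real.negMulLog ((μ (θf ⁻¹' {t})).toReal * (μ (Q ⁻¹' {q})).toReal) :=
          Finset.sum_congr rfl fun t _ => Finset.sum_congr rfl fun q _ => by rw [hterm t q]
      _ = _ := aux_sum_negMulLog_indep _ _ (aux_sum_toReal_measure_preimage hθ)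
          (aux_sum_toReal_measure_preimage hQ)
  -- ===== Piece 2 : invariance under the a.s. bijection (M,Q) ↔ (R,Q) =====
  have hWmeas : Measurable (fun ω => (R ω, Q ω)) := hRmeas.prodMk hQ
  have hInv1 : finEntropy μ (fun ω => (M ω, Q ω)) = finEntropy μ (fun ω => (R ω, Q ω)) :=
    aux_finEntropy_congr_of_inv hWmeas
      (fun x : (αS × αΦ) × αQ => (g (x.1.1, x.2, x.1.2), x.2))
      (fun y : αM × αQ => (h (y.1, y.2), y.2))
      (by filter_upwards [hg] with ω e; simp [hRdef, e])
      (by filter_upwards [hh] with ω e; simp [hRdef, ← e])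
  have hInv2 : finEntropy μ (fun ω => (θf ω, (M ω, Q ω)))
      = finEntropy μ (fun ω => (θf ω, (R ω, Q ω))) :=
    aux_finEntropy_congr_of_inv (hθ.prodMk hWmeas)
      (fun x : αθ × ((αS × αΦ) × αQ) => (x.1, (g (x.2.1.1, x.2.2, x.2.1.2), x.2.2)))
      (fun y : αθ × (αM × αQ) => (y.1, (h (y.2.1, y.2.2), y.2.2)))
      (by filter_upwards [hg] with ω e; simp [hRdef, e])
      (by filter_upwards [hh] with ω e; simp [hRdef, ← e])
  -- ===== Piece 3 : conditional independence gives
  --       H(θ,(R,Q)) + H(R) = H(θ,R) + H(R,Q) =====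
  have mA : ∀ (t : αθ) (r : αS × αΦ),
      MeasurableSet (θf ⁻¹' {t} ∩ (S ⁻¹' {r.1} ∩ Φ ⁻¹' {r.2})) := fun t r =>
    (msθ t).inter ((msS r.1).inter (msΦ r.2))
  have mX : ∀ r : αS × αΦ, MeasurableSet (S ⁻¹' {r.1} ∩ Φ ⁻¹' {r.2}) := fun r =>
    (msS r.1).inter (msΦ r.2)
  have marg_q : ∀ (t : αθ) (r : αS × αΦ),
      ∑ q : αQ, (μ (θf ⁻¹' {t} ∩ (S ⁻¹' {r.1} ∩ Φ ⁻¹' {r.2}) ∩ Q ⁻¹' {q})).toReal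
        = (μ (θf ⁻¹' {t} ∩ (S ⁻¹' {r.1} ∩ Φ ⁻¹' {r.2}))).toReal := fun t r =>
    aux_toReal_sum_fiber (mA t r) hQ
  have marg_t : ∀ (r : αS × αΦ) (q : αQ),
      ∑ t : αθ, (μ (θf ⁻¹' {t} ∩ (S ⁻¹' {r.1} ∩ Φ ⁻¹' {r.2}) ∩ Q ⁻¹' {q})).toReal
        = (μ ((S ⁻¹' {r.1} ∩ Φ ⁻¹' {r.2}) ∩ Q ⁻¹' {q})).toReal := by
    intro r q
    have hfib := aux_toReal_sum_fiber (μ := μ) ((mX r).inter (msQ q)) hθ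
    rw [← hfib]
    refine Finset.sum_congr rfl fun t _ => ?_
    congr 2
    ext ω
    simp only [Set.mem_inter_iff, Set.mem_preimage, Set.mem_singleton_iff]
    try tauto
  have marg_tq : ∀ r : αS × αΦ,
      ∑ t : αθ, ∑ q : αQ, (μ (θf ⁻¹' {t} ∩ (S ⁻¹' {r.1} ∩ Φ ⁻¹' {r.2}) ∩ Q ⁻¹' {q})).toReal
        = (μ (S ⁻¹' {r.1} ∩ Φ ⁻¹' {r.2})).toReal := by
    intro r
    rw [Finset.sum_congr rfl fun t _ => marg_q t r]
    have hfib := aux_toReal_sum_fiber (μ := μ) (mX r) hθ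
    rw [← hfib]
    refine Finset.sum_congr rfl fun t _ => ?_
    congr 2
    ext ω
    simp only [Set.mem_inter_iff, Set.mem_preimage, Set.mem_singleton_iff]
    try tauto
  have hci3 : ∀ (t : αθ) (r : αS × αΦ) (q : αQ),
      (μ (θf ⁻¹' {t} ∩ (S ⁻¹' {r.1} ∩ Φ ⁻¹' {r.2}) ∩ Q ⁻¹' {q})).toReal
          * (∑ t' : αθ, ∑ q' : αQ,
              (μ (θf ⁻¹' {t'} ∩ (S ⁻¹' {r.1} ∩ Φ ⁻¹' {r.2}) ∩ Q ⁻¹' {q'})).toReal)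
        = (∑ q' : αQ,
              (μ (θf ⁻¹' {t} ∩ (S ⁻¹' {r.1} ∩ Φ ⁻¹' {r.2}) ∩ Q ⁻¹' {q'})).toReal)
          * (∑ t' : αθ,
              (μ (θf ⁻¹' {t'} ∩ (S ⁻¹' {r.1} ∩ Φ ⁻¹' {r.2}) ∩ Q ⁻¹' {q})).toReal) := by
    intro t r q
    rw [marg_tq r, marg_q t r, marg_t r q]
    rw [← ENNReal.toReal_mul, ← ENNReal.toReal_mul]
    have e1 : θf ⁻¹' {t} ∩ (S ⁻¹' {r.1} ∩ Φ ⁻¹' {r.2}) ∩ Q ⁻¹' {q}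
        = Q ⁻¹' {q} ∩ θf ⁻¹' {t} ∩ (S ⁻¹' {r.1} ∩ Φ ⁻¹' {r.2}) := by
      ext ω
      simp only [Set.mem_inter_iff, Set.mem_preimage, Set.mem_singleton_iff]
      try tauto
    have e2 : (S ⁻¹' {r.1} ∩ Φ ⁻¹' {r.2}) ∩ Q ⁻¹' {q}
        = Q ⁻¹' {q} ∩ (S ⁻¹' {r.1} ∩ Φ ⁻¹' {r.2}) := by
      ext ω
      simp only [Set.mem_inter_iff, Set.mem_preimage, Set.mem_singleton_iff]
      try tauto
    rw [e1, e2, hcondindep q t r.1 r.2, mul_comm]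

  have Hci := aux_sum_negMulLog_condindep
    (fun (t : αθ) (r : αS × αΦ) (q : αQ) =>
      (μ (θf ⁻¹' {t} ∩ (S ⁻¹' {r.1} ∩ Φ ⁻¹' {r.2}) ∩ Q ⁻¹' {q})).toReal)
    (fun _ _ _ => ENNReal.toReal_nonneg) hci3
  -- conversion of entropies into triple sums
  have c1 : finEntropy μ (fun ω => (θf ω, (R ω, Q ω)))
      = ∑ t : αθ, ∑ r : αS × αΦ, ∑ q : αQ, Real.negMulLog
          ((μ (θf ⁻¹' {t} ∩ (S ⁻¹' {r.1} ∩ Φ ⁻¹' {r.2}) ∩ Q ⁻¹' {q})).toReal) := by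
    unfold finEntropy
    rw [Fintype.sum_prod_type]
    refine Finset.sum_congr rfl fun t _ => ?_
    rw [Fintype.sum_prod_type]
    refine Finset.sum_congr rfl fun r _ => Finset.sum_congr rfl fun q _ => ?_
    congr 3
    ext ω
    simp only [Set.mem_preimage, Set.mem_singleton_iff, Prod.ext_iff, Set.mem_inter_iff, hRdef]
    try tauto
  have c2 : finEntropy μ R = ∑ r : αS × αΦ, Real.negMulLog
      (∑ t : αθ, ∑ q : αQ,
        (μ (θf ⁻¹' {t} ∩ (S ⁻¹' {r.1} ∩ Φ ⁻¹' {r.2}) ∩ Q ⁻¹' {q})).toReal) := by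
    unfold finEntropy
    refine Finset.sum_congr rfl fun r _ => ?_
    rw [marg_tq r, hRpre r]
  have c3 : finEntropy μ (fun ω => (θf ω, R ω))
      = ∑ t : αθ, ∑ r : αS × αΦ, Real.negMulLog
          (∑ q : αQ, (μ (θf ⁻¹' {t} ∩ (S ⁻¹' {r.1} ∩ Φ ⁻¹' {r.2}) ∩ Q ⁻¹' {q})).toReal) := by
    unfold finEntropy
    rw [Fintype.sum_prod_type]
    refine Finset.sum_congr rfl fun t _ => Finset.sum_congr rfl fun r _ => ?_
    rw [marg_q t r]
    congr 3
    ext ω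
    simp only [Set.mem_preimage, Set.mem_singleton_iff, Prod.ext_iff, Set.mem_inter_iff, hRdef]
    try tauto
  have c4 : finEntropy μ (fun ω => (R ω, Q ω))
      = ∑ r : αS × αΦ, ∑ q : αQ, Real.negMulLog
          (∑ t : αθ, (μ (θf ⁻¹' {t} ∩ (S ⁻¹' {r.1} ∩ Φ ⁻¹' {r.2}) ∩ Q ⁻¹' {q})).toReal) := by
    unfold finEntropy
    rw [Fintype.sum_prod_type]
    refine Finset.sum_congr rfl fun r _ => Finset.sum_congr rfl fun q _ => ?_
    rw [marg_t r q]
    congr 3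
    ext ω
    simp only [Set.mem_preimage, Set.mem_singleton_iff, Prod.ext_iff, Set.mem_inter_iff, hRdef]
    try tauto
  have Hcond : finEntropy μ (fun ω => (θf ω, (R ω, Q ω))) + finEntropy μ R
      = finEntropy μ (fun ω => (θf ω, R ω)) + finEntropy μ (fun ω => (R ω, Q ω)) := by
    rw [c1, c2, c3, c4]
    exact Hci
  -- ===== Piece 4 : submodularity gives H(θ,R) + H(S) ≤ H(θ,S) + H(R) =====
  have marg_f : ∀ (t : αθ) (s : αS),
      ∑ f : αΦ, (μ (θf ⁻¹' {t} ∩ (S ⁻¹' {s} ∩ Φ ⁻¹' {f}))).toReal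
        = (μ (θf ⁻¹' {t} ∩ S ⁻¹' {s})).toReal := by
    intro t s
    have hfib := aux_toReal_sum_fiber (μ := μ) ((msθ t).inter (msS s)) hΦ
    rw [← hfib]
    refine Finset.sum_congr rfl fun f _ => ?_
    congr 2
    ext ω
    simp only [Set.mem_inter_iff, Set.mem_preimage, Set.mem_singleton_iff]
    try tauto
  have marg_t4 : ∀ (s : αS) (f : αΦ),
      ∑ t : αθ, (μ (θf ⁻¹' {t} ∩ (S ⁻¹' {s} ∩ Φ ⁻¹' {f}))).toReal
        = (μ (S ⁻¹' {s} ∩ Φ ⁻¹' {f})).toReal := by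
    intro s f
    have hfib := aux_toReal_sum_fiber (μ := μ) ((msS s).inter (msΦ f)) hθ
    rw [← hfib]
    refine Finset.sum_congr rfl fun t _ => ?_
    congr 2
    ext ω
    simp only [Set.mem_inter_iff, Set.mem_preimage, Set.mem_singleton_iff]
    try tauto
  have marg_tf : ∀ s : αS,
      ∑ t : αθ, ∑ f : αΦ, (μ (θf ⁻¹' {t} ∩ (S ⁻¹' {s} ∩ Φ ⁻¹' {f}))).toReal
        = (μ (S ⁻¹' {s})).toReal := by
    intro s
    rw [Finset.sum_congr rfl fun t _ => marg_f t s]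
    have hfib := aux_toReal_sum_fiber (μ := μ) (msS s) hθ
    rw [← hfib]
    refine Finset.sum_congr rfl fun t _ => ?_
    congr 2
    ext ω
    simp only [Set.mem_inter_iff, Set.mem_preimage, Set.mem_singleton_iff]
    try tauto
  have s1 : finEntropy μ (fun ω => (θf ω, R ω))
      = ∑ t : αθ, ∑ s : αS, ∑ f : αΦ, Real.negMulLog
          ((μ (θf ⁻¹' {t} ∩ (S ⁻¹' {s} ∩ Φ ⁻¹' {f}))).toReal) := by
    unfold finEntropy
    rw [Fintype.sum_prod_type]
    refine Finset.sum_congr rfl fun t _ => ?_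
    rw [Fintype.sum_prod_type]
    refine Finset.sum_congr rfl fun s _ => Finset.sum_congr rfl fun f _ => ?_
    congr 3
    ext ω
    simp only [Set.mem_preimage, Set.mem_singleton_iff, Prod.ext_iff, Set.mem_inter_iff, hRdef]
    try tauto
  have s2 : finEntropy μ S = ∑ s : αS, Real.negMulLog
      (∑ t : αθ, ∑ f : αΦ, (μ (θf ⁻¹' {t} ∩ (S ⁻¹' {s} ∩ Φ ⁻¹' {f}))).toReal) := by
    unfold finEntropy
    refine Finset.sum_congr rfl fun s _ => ?_
    rw [marg_tf s]
  have s3 : finEntropy μ (fun ω => (θf ω, S ω))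
      = ∑ t : αθ, ∑ s : αS, Real.negMulLog
          (∑ f : αΦ, (μ (θf ⁻¹' {t} ∩ (S ⁻¹' {s} ∩ Φ ⁻¹' {f}))).toReal) := by
    unfold finEntropy
    rw [Fintype.sum_prod_type]
    refine Finset.sum_congr rfl fun t _ => Finset.sum_congr rfl fun s _ => ?_
    rw [marg_f t s]
    congr 3
    ext ω
    simp only [Set.mem_preimage, Set.mem_singleton_iff, Prod.ext_iff, Set.mem_inter_iff]
    try tauto
  have s4 : finEntropy μ R = ∑ s : αS, ∑ f : αΦ, Real.negMulLog
      (∑ t : αθ, (μ (θf ⁻¹' {t} ∩ (S ⁻¹' {s} ∩ Φ ⁻¹' {f}))).toReal) := by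
    unfold finEntropy
    rw [Fintype.sum_prod_type]
    refine Finset.sum_congr rfl fun s _ => Finset.sum_congr rfl fun f _ => ?_
    rw [marg_t4 s f, hRpre (s, f)]
  have Hsub : finEntropy μ (fun ω => (θf ω, R ω)) + finEntropy μ S
      ≤ finEntropy μ (fun ω => (θf ω, S ω)) + finEntropy μ R := by
    rw [s1, s2, s3, s4]
    exact aux_sum_negMulLog_submod
      (fun (t : αθ) (s : αS) (f : αΦ) =>
        (μ (θf ⁻¹' {t} ∩ (S ⁻¹' {s} ∩ Φ ⁻¹' {f}))).toReal)
      (fun _ _ _ => ENNReal.toReal_nonneg)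
  -- ===== conclusion =====
  constructor
  · simp only [finCondMutualInfo, finCondEntropy]
    linarith [HθQ, hInv1, hInv2, Hcond]
  · simp only [finCondEntropy]
    linarith [Hsub]
end

section
/- Let (Ω, ℱ, P) be a probability space and let B, S, T, ε be random variables on Ω taking values in finite sets. Suppose: (i) ε is independent of the triple (B, S, T); (ii) there exist functions f and g such that M := f(B, ε) satisfies B = g(M, ε) almost surely; and (iii) there exist functions k and h such that S* := k(S, ε) satisfies (S, ε) = h(S*) almost surely. Then I(M ; S* | T) − I(B ; S | T) = H(ε) − H(ε | M, T) ≥ 0. -/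
open MeasureTheory ProbabilityTheory

section Aux

variable {Ω : Type*} [MeasurableSpace Ω] {μ : Measure Ω}

/-- `negMulLog` of a sum with at most one nonzero term. -/
lemma negMulLog_sum_of_unique {ι : Type*} (s : Finset ι) (p : ι → ℝ)
    (hu : ∀ i ∈ s, ∀ j ∈ s, p i ≠ 0 → p j ≠ 0 → i = j) :
    Real.negMulLog (∑ i ∈ s, p i) = ∑ i ∈ s, Real.negMulLog (p i) := by
  by_cases hex : ∃ i ∈ s, p i ≠ 0
  · obtain ⟨i₀, hi₀, hp₀⟩ := hex
    have hz : ∀ j ∈ s, j ≠ i₀ → p j = 0 := by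
      intro j hj hne
      by_contra hc
      exact hne (hu j hj i₀ hi₀ hc hp₀)
    rw [Finset.sum_eq_single_of_mem i₀ hi₀ hz,
      Finset.sum_eq_single_of_mem i₀ hi₀
        (fun j hj hne => by rw [hz j hj hne, Real.negMulLog_zero])]
  · push_neg at hex
    rw [Finset.sum_eq_zero hex,
      Finset.sum_eq_zero (fun j hj => by rw [hex j hj, Real.negMulLog_zero]),
      Real.negMulLog_zero]

/-- Fiberwise decomposition of the mass of a composed random variable. -/
lemma toReal_measure_comp_preimage {γ β : Type*} [Fintype γ] [MeasurableSpace γ]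
    [MeasurableSingletonClass γ] [DecidableEq β] [IsFiniteMeasure μ]
    {W : Ω → γ} (hW : Measurable W) (c : γ → β) (b : β) :
    (μ ((fun ω => c (W ω)) ⁻¹' {b})).toReal
      = ∑ a ∈ Finset.univ.filter (fun a => c a = b), (μ (W ⁻¹' {a})).toReal := by
  have hset : (fun ω => c (W ω)) ⁻¹' {b}
      = W ⁻¹' ↑(Finset.univ.filter (fun a => c a = b)) := by
    ext ω; simp
  rw [hset, ← sum_measure_preimage_singleton _
      (fun a _ => hW (measurableSet_singleton a)),
    ENNReal.toReal_sum (fun a _ => measure_ne_top μ _)]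

lemma sum_toReal_measure_preimage {γ : Type*} [Fintype γ] [MeasurableSpace γ]
    [MeasurableSingletonClass γ] [IsProbabilityMeasure μ]
    {W : Ω → γ} (hW : Measurable W) :
    ∑ a : γ, (μ (W ⁻¹' {a})).toReal = 1 := by
  rw [← ENNReal.toReal_sum (fun a _ => measure_ne_top μ _),
    sum_measure_preimage_singleton _ (fun a _ => hW (measurableSet_singleton a))]
  simp

/-- Entropy is invariant under an a.s. injective recoding. -/
lemma finEntropy_comp_eq {γ β : Type*} [Fintype γ] [Fintype β] [MeasurableSpace γ]
    [MeasurableSingletonClass γ] [IsProbabilityMeasure μ]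
    {W : Ω → γ} (hW : Measurable W) (c : γ → β) (d : β → γ)
    (hd : ∀ᵐ ω ∂μ, W ω = d (c (W ω))) :
    finEntropy μ (fun ω => c (W ω)) = finEntropy μ W := by
  classical
  rw [ae_iff] at hd
  have key : ∀ a : γ, (μ (W ⁻¹' {a})).toReal ≠ 0 → d (c a) = a := by
    intro a ha
    by_contra hc
    have hsub : W ⁻¹' {a} ⊆ {ω | ¬ W ω = d (c (W ω))} := by
      intro ω hω
      simp only [Set.mem_preimage, Set.mem_singleton_iff] at hω
      simp only [Set.mem_setOf_eq, hω]
      exact fun hh => hc hh.symm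
    have hz : μ (W ⁻¹' {a}) = 0 :=
      le_antisymm (le_trans (measure_mono hsub) (le_of_eq hd)) (zero_le)
    exact ha (by simp [hz])
  unfold finEntropy
  have step : ∀ b : β, Real.negMulLog ((μ ((fun ω => c (W ω)) ⁻¹' {b})).toReal)
      = ∑ a ∈ Finset.univ.filter (fun a => c a = b),
          Real.negMulLog ((μ (W ⁻¹' {a})).toReal) := by
    intro b
    rw [toReal_measure_comp_preimage hW c b]
    apply negMulLog_sum_of_unique
    intro i hi j hj hpi hpj
    have hi' := key i hpi
    have hj' := key j hpj
    simp only [Finset.mem_filter] at hi hj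
    rw [← hi', ← hj', hi.2, hj.2]
  rw [Finset.sum_congr rfl (fun b _ => step b)]
  exact Finset.sum_fiberwise _ _ _

/-- Entropy of a pair of independent random variables. -/
lemma finEntropy_pair_of_indepFun {α β : Type*} [Fintype α] [Fintype β]
    [MeasurableSpace α] [MeasurableSingletonClass α]
    [MeasurableSpace β] [MeasurableSingletonClass β]
    [IsProbabilityMeasure μ] {X : Ω → α} {Y : Ω → β}
    (hX : Measurable X) (hY : Measurable Y) (hind : IndepFun X Y μ) :
    finEntropy μ (fun ω => (X ω, Y ω)) = finEntropy μ X + finEntropy μ Y := by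
  unfold finEntropy
  have hxy : ∀ a : α, ∀ b : β, (μ ((fun ω => (X ω, Y ω)) ⁻¹' {(a, b)})).toReal
      = (μ (X ⁻¹' {a})).toReal * (μ (Y ⁻¹' {b})).toReal := by
    intro a b
    have hs : (fun ω => (X ω, Y ω)) ⁻¹' {(a, b)} = X ⁻¹' {a} ∩ Y ⁻¹' {b} := by
      ext ω; simp [Prod.ext_iff]
    rw [hs, hind.measure_inter_preimage_eq_mul _ _ (measurableSet_singleton _)
      (measurableSet_singleton _), ENNReal.toReal_mul]
  have hxt := sum_toReal_measure_preimage (μ := μ) hX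
  have hyt := sum_toReal_measure_preimage (μ := μ) hY
  rw [Fintype.sum_prod_type]
  have hrow : ∀ a : α, ∑ b : β,
      Real.negMulLog ((μ ((fun ω => (X ω, Y ω)) ⁻¹' {(a, b)})).toReal)
      = Real.negMulLog ((μ (X ⁻¹' {a})).toReal)
        + (μ (X ⁻¹' {a})).toReal
          * ∑ b : β, Real.negMulLog ((μ (Y ⁻¹' {b})).toReal) := by
    intro a
    simp only [hxy, Real.negMulLog_mul]
    rw [Finset.sum_add_distrib, ← Finset.sum_mul, ← Finset.mul_sum, hyt, one_mul]
  rw [Finset.sum_congr rfl (fun a _ => hrow a), Finset.sum_add_distrib,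
    ← Finset.sum_mul, hxt, one_mul]

end Aux
section Sub

variable {Ω : Type*} [MeasurableSpace Ω] {μ : Measure Ω}

/-- Gibbs-style subadditivity for finite probability vectors. -/
lemma sum_negMulLog_pair_le {α β : Type*} [Fintype α] [Fintype β] (p : α × β → ℝ)
    (hp : ∀ x, 0 ≤ p x) (hsum : ∑ x, p x = 1) :
    ∑ x, Real.negMulLog (p x)
      ≤ (∑ a, Real.negMulLog (∑ b, p (a, b)))
        + ∑ b, Real.negMulLog (∑ a, p (a, b)) := by
  set pA : α → ℝ := fun a => ∑ b, p (a, b) with hpA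
  set pB : β → ℝ := fun b => ∑ a, p (a, b) with hpB
  have hpA0 : ∀ a, 0 ≤ pA a := fun a => Finset.sum_nonneg fun b _ => hp _
  have hpB0 : ∀ b, 0 ≤ pB b := fun b => Finset.sum_nonneg fun a _ => hp _
  have hleA : ∀ a b, p (a, b) ≤ pA a := fun a b =>
    Finset.single_le_sum (fun b _ => hp _) (Finset.mem_univ b)
  have hleB : ∀ a b, p (a, b) ≤ pB b := fun a b =>
    Finset.single_le_sum (f := fun a' => p (a', b)) (fun a' _ => hp _) (Finset.mem_univ a)
  have key : ∀ a b, Real.negMulLog (p (a, b)) + p (a, b) * Real.log (pA a)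
      + p (a, b) * Real.log (pB b) ≤ pA a * pB b - p (a, b) := by
    intro a b
    rcases eq_or_lt_of_le (hp (a, b)) with hz | hpos
    · rw [← hz]
      simp only [Real.negMulLog_zero, zero_mul, add_zero, sub_zero]
      exact mul_nonneg (hpA0 a) (hpB0 b)
    · have hA : 0 < pA a := lt_of_lt_of_le hpos (hleA a b)
      have hB : 0 < pB b := lt_of_lt_of_le hpos (hleB a b)
      have hlog : Real.log (pA a * pB b / p (a, b)) ≤ pA a * pB b / p (a, b) - 1 :=
        Real.log_le_sub_one_of_pos (by positivity)
      rw [Real.log_div (by positivity) (ne_of_gt hpos),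
        Real.log_mul (ne_of_gt hA) (ne_of_gt hB)] at hlog
      have hm := mul_le_mul_of_nonneg_left hlog (le_of_lt hpos)
      have hdiv : p (a, b) * (pA a * pB b / p (a, b) - 1) = pA a * pB b - p (a, b) := by
        field_simp
      rw [hdiv] at hm
      rw [Real.negMulLog]
      nlinarith [hm]
  have main : ∑ x : α × β, (Real.negMulLog (p x) + p x * Real.log (pA x.1)
      + p x * Real.log (pB x.2)) ≤ ∑ x : α × β, (pA x.1 * pB x.2 - p x) :=
    Finset.sum_le_sum (fun x _ => key x.1 x.2)
  have hsumA1 : ∑ a, pA a = 1 := by rw [← hsum, Fintype.sum_prod_type]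
  have hsumB1 : ∑ b, pB b = 1 := by
    rw [← hsum, Fintype.sum_prod_type]; exact Finset.sum_comm
  have hrhs : ∑ x : α × β, (pA x.1 * pB x.2 - p x) = 0 := by
    rw [Finset.sum_sub_distrib, hsum, Fintype.sum_prod_type]
    have : ∀ a : α, ∑ b : β, pA a * pB b = pA a := by
      intro a; rw [← Finset.mul_sum, hsumB1, mul_one]
    rw [Finset.sum_congr rfl (fun a _ => this a), hsumA1]
    norm_num
  have e1 : ∑ x : α × β, p x * Real.log (pA x.1) = - ∑ a, Real.negMulLog (pA a) := by
    rw [Fintype.sum_prod_type, ← Finset.sum_neg_distrib]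
    refine Finset.sum_congr rfl fun a _ => ?_
    rw [show ∑ y : β, p (a, y) * Real.log (pA (a, y).1)
        = ∑ y : β, p (a, y) * Real.log (pA a) from rfl, ← Finset.sum_mul, Real.negMulLog]
    ring
  have e2 : ∑ x : α × β, p x * Real.log (pB x.2) = - ∑ b, Real.negMulLog (pB b) := by
    rw [Fintype.sum_prod_type, Finset.sum_comm, ← Finset.sum_neg_distrib]
    refine Finset.sum_congr rfl fun b _ => ?_
    rw [show ∑ x : α, p (x, b) * Real.log (pB (x, b).2)
        = ∑ x : α, p (x, b) * Real.log (pB b) from rfl, ← Finset.sum_mul, Real.negMulLog]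
    ring
  have hsplit : ∑ x : α × β, (Real.negMulLog (p x) + p x * Real.log (pA x.1)
      + p x * Real.log (pB x.2))
      = ∑ x : α × β, Real.negMulLog (p x) + ∑ x : α × β, p x * Real.log (pA x.1)
        + ∑ x : α × β, p x * Real.log (pB x.2) := by
    rw [Finset.sum_add_distrib, Finset.sum_add_distrib]
  linarith [main, hrhs, e1, e2, hsplit]

/-- Entropy subadditivity: `H(u(W), v(W)) ≤ H(u(W)) + H(v(W))`. -/
lemma finEntropy_pair_le {γ α β : Type*} [Fintype γ] [Fintype α] [Fintype β]
    [MeasurableSpace γ] [MeasurableSingletonClass γ] [IsProbabilityMeasure μ]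
    {W : Ω → γ} (hW : Measurable W) (u : γ → α) (v : γ → β) :
    finEntropy μ (fun ω => (u (W ω), v (W ω)))
      ≤ finEntropy μ (fun ω => u (W ω)) + finEntropy μ (fun ω => v (W ω)) := by
  classical
  set q : γ → ℝ := fun g => (μ (W ⁻¹' {g})).toReal with hq
  set p : α × β → ℝ := fun x => (μ ((fun ω => (u (W ω), v (W ω))) ⁻¹' {x})).toReal with hp
  have hp0 : ∀ x, 0 ≤ p x := fun x => ENNReal.toReal_nonneg
  have hpfib : ∀ x : α × β, p x
      = ∑ g ∈ Finset.univ.filter (fun g => (u g, v g) = x), q g := fun x =>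
    toReal_measure_comp_preimage hW (fun g => (u g, v g)) x
  have hps : ∑ x, p x = 1 := by
    simp only [hpfib]
    rw [Finset.sum_fiberwise]
    exact sum_toReal_measure_preimage hW
  have hAmarg : ∀ a, ∑ b, p (a, b) = (μ ((fun ω => u (W ω)) ⁻¹' {a})).toReal := by
    intro a
    rw [toReal_measure_comp_preimage hW u a]
    simp only [hpfib]
    rw [← Finset.sum_fiberwise_of_maps_to (t := Finset.univ)
      (fun x _ => Finset.mem_univ (v x)) q]
    apply Finset.sum_congr rfl
    intro b _
    apply Finset.sum_congr _ (fun _ _ => rfl)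
    ext g
    simp [Prod.ext_iff]
  have hBmarg : ∀ b, ∑ a, p (a, b) = (μ ((fun ω => v (W ω)) ⁻¹' {b})).toReal := by
    intro b
    rw [toReal_measure_comp_preimage hW v b]
    simp only [hpfib]
    rw [← Finset.sum_fiberwise_of_maps_to (t := Finset.univ)
      (fun x _ => Finset.mem_univ (u x)) q]
    apply Finset.sum_congr rfl
    intro a _
    apply Finset.sum_congr _ (fun _ _ => rfl)
    ext g
    simp [Prod.ext_iff, and_comm]
  have hcore := sum_negMulLog_pair_le p hp0 hps
  unfold finEntropy
  calc ∑ x : α × β, Real.negMulLog ((μ ((fun ω => (u (W ω), v (W ω))) ⁻¹' {x})).toReal)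
      = ∑ x, Real.negMulLog (p x) := by rfl
    _ ≤ (∑ a, Real.negMulLog (∑ b, p (a, b)))
        + ∑ b, Real.negMulLog (∑ a, p (a, b)) := hcore
    _ = (∑ a, Real.negMulLog ((μ ((fun ω => u (W ω)) ⁻¹' {a})).toReal))
        + ∑ b, Real.negMulLog ((μ ((fun ω => v (W ω)) ⁻¹' {b})).toReal) := by
      simp only [hAmarg, hBmarg]

end Sub

/-- **Label-shift noise increases target–support dependence by `H(ε) − H(ε | M, T)`.**
Suppose (i) `ε` is independent of `(B, S, T)`, (ii) `M := f(B, ε)` satisfies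
`B = g(M, ε)` a.s., and (iii) `S* := k(S, ε)` satisfies `(S, ε) = h(S*)` a.s.  Then
`I(M ; S* | T) − I(B ; S | T) = H(ε) − H(ε | (M, T)) ≥ 0`. -/
theorem label_shift_information_increase
    {Ω : Type*} [MeasurableSpace Ω] (μ : Measure Ω) [IsProbabilityMeasure μ]
    {αB αS αT αE αM αS' : Type*}
    [Fintype αB] [Fintype αS] [Fintype αT] [Fintype αE] [Fintype αM] [Fintype αS']
    [MeasurableSpace αB] [MeasurableSingletonClass αB]
    [MeasurableSpace αS] [MeasurableSingletonClass αS]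
    [MeasurableSpace αT] [MeasurableSingletonClass αT]
    [MeasurableSpace αE] [MeasurableSingletonClass αE]
    (B : Ω → αB) (S : Ω → αS) (T : Ω → αT) (ε : Ω → αE)
    (hB : Measurable B) (hS : Measurable S) (hT : Measurable T) (hε : Measurable ε)
    (hindep : IndepFun ε (fun ω => (B ω, S ω, T ω)) μ)
    (f : αB × αE → αM) (g : αM × αE → αB)
    (hg : ∀ᵐ ω ∂μ, B ω = g (f (B ω, ε ω), ε ω))
    (k : αS × αE → αS') (h : αS' → αS × αE)
    (hh : ∀ᵐ ω ∂μ, (S ω, ε ω) = h (k (S ω, ε ω))) :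
    finCondMutualInfo μ (fun ω => f (B ω, ε ω)) (fun ω => k (S ω, ε ω)) T
        - finCondMutualInfo μ B S T
        = finEntropy μ ε - finCondEntropy μ ε (fun ω => (f (B ω, ε ω), T ω))
      ∧ 0 ≤ finEntropy μ ε - finCondEntropy μ ε (fun ω => (f (B ω, ε ω), T ω)) := by
  classical
  -- E3 : H(M, (S*, T)) = H(B, (S, T)) + H(ε)
  have e3a : finEntropy μ (fun ω => (f (B ω, ε ω), (k (S ω, ε ω), T ω)))
      = finEntropy μ (fun ω => ((B ω, (S ω, T ω)), ε ω)) := by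
    apply finEntropy_comp_eq ((hB.prodMk (hS.prodMk hT)).prodMk hε)
      (c := fun q : (αB × αS × αT) × αE => (f (q.1.1, q.2), (k (q.1.2.1, q.2), q.1.2.2)))
      (d := fun r : αM × αS' × αT =>
        ((g (r.1, (h r.2.1).2), ((h r.2.1).1, r.2.2)), (h r.2.1).2))
    filter_upwards [hg, hh] with ω h1 h2
    simp [← h2, ← h1]
  have e3b : finEntropy μ (fun ω => ((B ω, (S ω, T ω)), ε ω))
      = finEntropy μ (fun ω => (B ω, (S ω, T ω))) + finEntropy μ ε :=
    finEntropy_pair_of_indepFun (hB.prodMk (hS.prodMk hT)) hε hindep.symm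
  -- E4 : H(S*, T) = H(S, T) + H(ε)
  have e4a : finEntropy μ (fun ω => (k (S ω, ε ω), T ω))
      = finEntropy μ (fun ω => ((S ω, T ω), ε ω)) := by
    apply finEntropy_comp_eq ((hS.prodMk hT).prodMk hε)
      (c := fun q : (αS × αT) × αE => (k (q.1.1, q.2), q.1.2))
      (d := fun r : αS' × αT => (((h r.1).1, r.2), (h r.1).2))
    filter_upwards [hh] with ω h2
    simp [← h2]
  have ind4 : IndepFun (fun ω => (S ω, T ω)) ε μ :=
    (hindep.comp measurable_id (measurable_of_countable
      (fun p : αB × αS × αT => p.2))).symm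
  have e4b : finEntropy μ (fun ω => ((S ω, T ω), ε ω))
      = finEntropy μ (fun ω => (S ω, T ω)) + finEntropy μ ε :=
    finEntropy_pair_of_indepFun (hS.prodMk hT) hε ind4
  -- E9 : H(ε, (M, T)) = H(B, T) + H(ε)
  have e9a : finEntropy μ (fun ω => (ε ω, (f (B ω, ε ω), T ω)))
      = finEntropy μ (fun ω => ((B ω, T ω), ε ω)) := by
    apply finEntropy_comp_eq ((hB.prodMk hT).prodMk hε)
      (c := fun q : (αB × αT) × αE => (q.2, (f (q.1.1, q.2), q.1.2)))
      (d := fun r : αE × αM × αT => ((g (r.2.1, r.1), r.2.2), r.1))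
    filter_upwards [hg] with ω h1
    simp [← h1]
  have ind9 : IndepFun (fun ω => (B ω, T ω)) ε μ :=
    (hindep.comp measurable_id (measurable_of_countable
      (fun p : αB × αS × αT => (p.1, p.2.2)))).symm
  have e9b : finEntropy μ (fun ω => ((B ω, T ω), ε ω))
      = finEntropy μ (fun ω => (B ω, T ω)) + finEntropy μ ε :=
    finEntropy_pair_of_indepFun (hB.prodMk hT) hε ind9
  -- subadditivity : H(ε, (M, T)) ≤ H(ε) + H(M, T)
  have ile : finEntropy μ (fun ω => (ε ω, (f (B ω, ε ω), T ω)))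
      ≤ finEntropy μ ε + finEntropy μ (fun ω => (f (B ω, ε ω), T ω)) :=
    finEntropy_pair_le (hB.prodMk (hε.prodMk hT))
      (fun w : αB × αE × αT => w.2.1) (fun w => (f (w.1, w.2.1), w.2.2))
  simp only [finCondMutualInfo, finCondEntropy]
  constructor
  · linarith [e3a, e3b, e4a, e4b, e9a, e9b]
  · linarith [ile]
end
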